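/- arXiv:1702.01744 — 2 statements merged into one kernel-verified Lean document; each statement's English description precedes it below -/
import Mathlib

section
/- For n ≥ 1, the number of labeled plane trees on n+1 vertices (with any vertex as root) equals (2n)!/n!. -/
/-- `p` is the parent function of a rooted tree on `Fin m` with (arbitrary) root `r`:
the unique fixed point of `p` is `r`, and every vertex eventually reaches it. -/
def IsTreeRootedAt (m : ℕ) (p : Fin m → Fin m) (r : Fin m) : Prop :=
  (∀ v, p v = v ↔ v = r) ∧ ∀ v, ∃ l, (p^[l]) v = r

/-- `rk` linearly orders the children of every vertex, by mapping the children of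
each vertex `x` bijectively onto `{0, …, (#children of x) - 1}`; vertices that are
children of nobody are normalized to have rank `0`. -/
def IsPlaneOrder (m : ℕ) (p : Fin m → Fin m) (rk : Fin m → ℕ) : Prop :=
  (∀ x : Fin m, Set.BijOn rk {v | p v = x ∧ v ≠ x}
      (Set.Iio ({v : Fin m | p v = x ∧ v ≠ x}.ncard))) ∧
  ∀ v, p v = v → rk v = 0

set_option linter.unusedSectionVars false
set_option linter.unusedVariables false
set_option maxHeartbeats 1000000

namespace LPT

variable {α : Type*} [DecidableEq α]

def labs : Tree α → List α
  | BinaryTree.nil => []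
  | BinaryTree.node a l r => a :: (labs l ++ labs r)

/-- The (vertex, parent, rank) entries determined by a binary tree viewed (via the rotation
correspondence) as the plane forest of strict descendants of a context vertex `π`, where the
right spine of the tree consists of children of `π` with ranks `k, k+1, …`. -/
def spec : Tree α → α → ℕ → List (α × α × ℕ)
  | BinaryTree.nil, _, _ => []
  | BinaryTree.node a l r, π, k => (a, π, k) :: (spec l a 0 ++ spec r π (k + 1))

/-- Simple association-list lookup with default `(v, 0)`. -/
def look (v : α) : List (α × α × ℕ) → α × ℕ
  | [] => (v, 0)
  | (w, e) :: S => if w = v then e else look v S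

theorem labs_length : ∀ t : Tree α, (labs t).length = t.numNodes
  | BinaryTree.nil => rfl
  | BinaryTree.node a l r => by
    simp only [labs, List.length_cons, List.length_append, labs_length l, labs_length r,
      BinaryTree.numNodes]

theorem mem_labs_of_mem_spec : ∀ {t : Tree α} {π k v q j},
    (v, q, j) ∈ spec t π k → v ∈ labs t
  | BinaryTree.nil, _, _, _, _, _, h => by simp [spec] at h
  | BinaryTree.node a l r, π, k, v, q, j, h => by
    simp only [spec, List.mem_cons, List.mem_append] at h
    rcases h with h | h | h
    · obtain ⟨rfl, -⟩ := Prod.mk.injEq .. ▸ h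
      simp [labs]
    · exact List.mem_cons_of_mem _ (List.mem_append_left _ (mem_labs_of_mem_spec h))
    · exact List.mem_cons_of_mem _ (List.mem_append_right _ (mem_labs_of_mem_spec h))

theorem parent_mem_of_mem_spec : ∀ {t : Tree α} {π k v q j},
    (v, q, j) ∈ spec t π k → q = π ∨ q ∈ labs t
  | BinaryTree.nil, _, _, _, _, _, h => by simp [spec] at h
  | BinaryTree.node a l r, π, k, v, q, j, h => by
    simp only [spec, List.mem_cons, List.mem_append] at h
    simp only [labs, List.mem_cons, List.mem_append]
    rcases h with h | h | h
    · exact Or.inl (Prod.ext_iff.1 (Prod.ext_iff.1 h).2).1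
    · rcases parent_mem_of_mem_spec h with h' | h'
      · exact Or.inr (Or.inl h')
      · exact Or.inr (Or.inr (Or.inl h'))
    · rcases parent_mem_of_mem_spec h with h' | h'
      · exact Or.inl h'
      · exact Or.inr (Or.inr (Or.inr h'))

theorem ne_parent_of_mem_spec : ∀ {t : Tree α} {π k v q j},
    (labs t).Nodup → π ∉ labs t → (v, q, j) ∈ spec t π k → v ≠ q
  | BinaryTree.nil, _, _, _, _, _, _, _, h => by simp [spec] at h
  | BinaryTree.node a l r, π, k, v, q, j, hnd, hπ, h => by
    simp only [labs, List.nodup_cons, List.nodup_append] at hnd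
    simp only [labs, List.mem_cons, List.mem_append] at hπ
    push_neg at hπ
    simp only [spec, List.mem_cons, List.mem_append] at h
    rcases h with h | h | h
    · obtain ⟨rfl, rfl, -⟩ : v = a ∧ q = π ∧ j = k := by
        simpa [Prod.ext_iff] using h
      exact fun hh => hπ.1 hh.symm
    · exact ne_parent_of_mem_spec hnd.2.1 (fun hc => hnd.1 (List.mem_append_left _ hc)) h
    · exact ne_parent_of_mem_spec hnd.2.2.1 hπ.2.2 h

theorem keys_spec : ∀ (t : Tree α) (π : α) (k : ℕ),
    (spec t π k).map Prod.fst = labs t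
  | BinaryTree.nil, _, _ => rfl
  | BinaryTree.node a l r, π, k => by
    simp [spec, labs, keys_spec l, keys_spec r]

theorem look_eq_of_mem {S : List (α × α × ℕ)} (hnd : (S.map Prod.fst).Nodup)
    {v : α} {e : α × ℕ} (h : (v, e) ∈ S) : look v S = e := by
  induction S with
  | nil => simp at h
  | cons we S ih =>
    obtain ⟨w, e'⟩ := we
    simp only [List.map_cons, List.nodup_cons] at hnd
    rcases List.mem_cons.1 h with h | h
    · obtain ⟨rfl, rfl⟩ : v = w ∧ e = e' := by
        have := Prod.ext_iff.1 h
        exact ⟨this.1, Prod.ext_iff.2 ⟨(Prod.ext_iff.1 this.2).1, (Prod.ext_iff.1 this.2).2⟩⟩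
      simp [look]
    · have : w ≠ v := by
        rintro rfl
        exact hnd.1 (List.mem_map.2 ⟨(w, e), h, rfl⟩)
      simp [look, this, ih hnd.2 h]

theorem mem_of_look {S : List (α × α × ℕ)} {v : α}
    (h : v ∈ S.map Prod.fst) : (v, look v S) ∈ S := by
  induction S with
  | nil => simp at h
  | cons we S ih =>
    obtain ⟨w, e'⟩ := we
    by_cases hw : w = v
    · subst hw; simp [look]
    · simp only [List.map_cons, List.mem_cons] at h
      rcases h with h | h
      · exact absurd h.symm hw
      · simp [look, hw, ih h]

theorem look_eq_default {S : List (α × α × ℕ)} {v : α}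
    (h : v ∉ S.map Prod.fst) : look v S = (v, 0) := by
  induction S with
  | nil => rfl
  | cons we S ih =>
    obtain ⟨w, e'⟩ := we
    simp only [List.map_cons, List.mem_cons] at h
    push_neg at h
    simp [look, Ne.symm h.1, ih h.2]


/-- Children characterization: for each vertex `x`, the entries of `spec t π k` having
parent `x` are exactly an explicit list `cs` of children, with consecutive ranks. -/
theorem children_spec (t : Tree α) : ∀ (π : α) (k : ℕ), (labs t).Nodup → π ∉ labs t →
    ∀ x : α, ∃ cs : List α, cs.Sublist (labs t) ∧
      ∀ v j, ((v, x, j) ∈ spec t π k ↔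
        ∃ i : ℕ, cs[i]? = some v ∧ j = (if x = π then k else 0) + i) := by
  induction t with
  | nil =>
    intro π k _ _ x
    exact ⟨[], List.nil_sublist _, by simp [spec]⟩
  | node a l r ihl ihr =>
    intro π k hnd hπ x
    simp only [labs, List.nodup_cons, List.nodup_append, List.mem_append] at hnd
    obtain ⟨hal_r, hlnd, hrnd, hdisj⟩ := hnd
    push_neg at hal_r
    obtain ⟨hal, har⟩ := hal_r
    simp only [labs, List.mem_cons, List.mem_append] at hπ
    push_neg at hπ
    obtain ⟨hπa, hπl, hπr⟩ := hπ
    have hmem : ∀ v q j, ((v, q, j) ∈ spec (BinaryTree.node a l r) π k ↔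
        (v = a ∧ q = π ∧ j = k) ∨ (v, q, j) ∈ spec l a 0 ∨ (v, q, j) ∈ spec r π (k + 1)) := by
      intro v q j
      simp [spec, Prod.ext_iff]
    by_cases hxπ : x = π
    · subst hxπ
      obtain ⟨cs, hsub, hch⟩ := ihr x (k + 1) hrnd hπr x
      simp only [eq_self_iff_true, ite_true] at hch
      refine ⟨a :: cs, List.Sublist.cons₂ a (hsub.trans (List.sublist_append_right _ _)), ?_⟩
      intro v j
      rw [hmem]
      simp only [eq_self_iff_true, ite_true, true_and, and_true]
      constructor
      · rintro (⟨rfl, rfl⟩ | h | h)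
        · exact ⟨0, by simp⟩
        · rcases parent_mem_of_mem_spec h with h' | h'
          · exact absurd h' hπa
          · exact absurd h' hπl
        · obtain ⟨i, hi, hj⟩ := (hch v j).1 h
          exact ⟨i + 1, by simpa using hi, by omega⟩
      · rintro ⟨i, hi, rfl⟩
        cases i with
        | zero =>
          simp only [List.getElem?_cons_zero, Option.some.injEq] at hi
          exact Or.inl ⟨hi.symm, by omega⟩
        | succ i =>
          simp only [List.getElem?_cons_succ] at hi
          exact Or.inr (Or.inr ((hch v _).2 ⟨i, hi, by omega⟩))
    · by_cases hxa : x = a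
      · subst hxa
        obtain ⟨cs, hsub, hch⟩ := ihl x 0 hlnd hal x
        simp only [if_pos rfl] at hch
        refine ⟨cs, (hsub.trans (List.sublist_append_left _ _)).trans (List.sublist_cons_self _ _), ?_⟩
        intro v j
        rw [hmem, if_neg hxπ]
        constructor
        · rintro (⟨-, h, -⟩ | h | h)
          · exact absurd h hxπ
          · exact (hch v j).1 h
          · rcases parent_mem_of_mem_spec h with h' | h'
            · exact absurd h' hxπ
            · exact absurd h' har
        · rintro ⟨i, hi, rfl⟩
          exact Or.inr (Or.inl ((hch v _).2 ⟨i, hi, rfl⟩))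
      · by_cases hxl : x ∈ labs l
        · obtain ⟨cs, hsub, hch⟩ := ihl a 0 hlnd hal x
          simp only [if_neg hxa] at hch
          refine ⟨cs, (hsub.trans (List.sublist_append_left _ _)).trans
            (List.sublist_cons_self _ _), ?_⟩
          intro v j
          rw [hmem, if_neg hxπ]
          constructor
          · rintro (⟨-, h, -⟩ | h | h)
            · exact absurd h hxπ
            · exact (hch v j).1 h
            · rcases parent_mem_of_mem_spec h with h' | h'
              · exact absurd h' hxπ
              · exact absurd h' (fun h'' => hdisj x hxl x h'' rfl)
          · rintro ⟨i, hi, rfl⟩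
            exact Or.inr (Or.inl ((hch v _).2 ⟨i, hi, rfl⟩))
        · obtain ⟨cs, hsub, hch⟩ := ihr π (k + 1) hrnd hπr x
          simp only [if_neg hxπ] at hch
          refine ⟨cs, (hsub.trans (List.sublist_append_right _ _)).trans
            (List.sublist_cons_self _ _), ?_⟩
          intro v j
          rw [hmem, if_neg hxπ]
          constructor
          · rintro (⟨-, h, -⟩ | h | h)
            · exact absurd h hxπ
            · rcases parent_mem_of_mem_spec h with h' | h'
              · exact absurd h' hxa
              · exact absurd h' hxl
            · exact (hch v j).1 h
          · rintro ⟨i, hi, rfl⟩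
            exact Or.inr (Or.inr ((hch v _).2 ⟨i, hi, rfl⟩))


/-! ### The code of a tree -/

section Code

variable {m : ℕ}

/-- Parent function read off a spec list. -/
def pf (S : List (Fin m × Fin m × ℕ)) (v : Fin m) : Fin m := (look v S).1
/-- Rank function read off a spec list. -/
def rf (S : List (Fin m × Fin m × ℕ)) (v : Fin m) : ℕ := (look v S).2

variable {t : Tree (Fin m)} {r : Fin m}

theorem keys_nodup (hnd : (labs t).Nodup) :
    ((spec t r 0).map Prod.fst).Nodup := by rw [keys_spec]; exact hnd

theorem lookS (hnd : (labs t).Nodup) {v q : Fin m} {j : ℕ}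
    (h : (v, q, j) ∈ spec t r 0) : look v (spec t r 0) = (q, j) :=
  look_eq_of_mem (keys_nodup hnd) h

theorem mem_of_labs (hv : v ∈ labs t) : (v, look v (spec t r 0)) ∈ spec t r 0 :=
  mem_of_look (by rw [keys_spec]; exact hv)

theorem look_of_not_labs (hv : v ∉ labs t) : look v (spec t r 0) = (v, 0) :=
  look_eq_default (by rw [keys_spec]; exact hv)

variable (hnd : (labs t).Nodup) (hr : r ∉ labs t) (hcov : ∀ v, v ≠ r → v ∈ labs t)
include hnd hr

include hcov in
theorem pf_eq_self_iff : ∀ v, pf (spec t r 0) v = v ↔ v = r := by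
  intro v
  constructor
  · intro h
    by_contra hvr
    have hv := hcov v hvr
    have hmem := mem_of_labs (r := r) hv
    have hne := ne_parent_of_mem_spec hnd hr hmem
    exact hne h.symm
  · rintro rfl
    rw [pf, look_of_not_labs hr]

omit hcov in
theorem reach_aux : ∀ (t' : Tree (Fin m)) (π : Fin m) (k : ℕ),
    (∀ e ∈ spec t' π k, e ∈ spec t r 0) → (∃ l, (pf (spec t r 0))^[l] π = r) →
    ∀ v ∈ labs t', ∃ l, (pf (spec t r 0))^[l] v = r := by
  intro t'
  induction t' with
  | nil => intro π k _ _ v hv; simp [labs] at hv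
  | node a l r' ihl ihr =>
    intro π k hsub hπ v hv
    have ha : (a, π, k) ∈ spec t r 0 := hsub _ (by simp [spec])
    have hpa : pf (spec t r 0) a = π := by rw [pf, lookS hnd ha]
    have hareach : ∃ l, (pf (spec t r 0))^[l] a = r := by
      obtain ⟨l₀, hl₀⟩ := hπ
      exact ⟨l₀ + 1, by rw [Function.iterate_succ_apply, hpa]; exact hl₀⟩
    simp only [labs, List.mem_cons, List.mem_append] at hv
    rcases hv with rfl | hv | hv
    · exact hareach
    · exact ihl a 0 (fun e he => hsub _ (by simp [spec]; tauto)) hareach v hv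
    · exact ihr π (k + 1) (fun e he => hsub _ (by simp [spec]; tauto)) hπ v hv

include hcov in
theorem code_isTree : IsTreeRootedAt m (pf (spec t r 0)) r := by
  refine ⟨pf_eq_self_iff hnd hr hcov, fun v => ?_⟩
  by_cases hvr : v = r
  · exact ⟨0, hvr⟩
  · exact reach_aux hnd hr t r 0 (fun e he => he) ⟨0, rfl⟩ v (hcov v hvr)

include hcov in
theorem code_isPlane : IsPlaneOrder m (pf (spec t r 0)) (rf (spec t r 0)) := by
  constructor
  · intro x
    obtain ⟨cs, hsub, hch⟩ := children_spec t r 0 hnd hr x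
    have hcsnd : cs.Nodup := hsub.nodup hnd
    simp only [ite_self, Nat.zero_add] at hch
    have c1 : ∀ v : Fin m, (pf (spec t r 0) v = x ∧ v ≠ x) ↔ ∃ j, (v, x, j) ∈ spec t r 0 := by
      intro v
      constructor
      · rintro ⟨hpv, hvx⟩
        have hv : v ∈ labs t := by
          by_contra hv
          rw [pf, look_of_not_labs hv] at hpv
          exact hvx hpv
        have hmem := mem_of_labs (r := r) hv
        exact ⟨rf (spec t r 0) v, by rw [← hpv]; exact hmem⟩
      · rintro ⟨j, hj⟩
        have := lookS hnd hj
        exact ⟨by rw [pf, this], ne_parent_of_mem_spec hnd hr hj⟩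
    have c2 : {v : Fin m | pf (spec t r 0) v = x ∧ v ≠ x} = {v | v ∈ cs} := by
      ext v
      simp only [Set.mem_setOf_eq, c1]
      constructor
      · rintro ⟨j, hj⟩
        obtain ⟨i, hi, -⟩ := (hch v j).1 hj
        exact List.mem_iff_getElem?.2 ⟨i, hi⟩
      · intro hv
        obtain ⟨i, hi⟩ := List.mem_iff_getElem?.1 hv
        exact ⟨i, (hch v i).2 ⟨i, hi, rfl⟩⟩
    have c3 : ∀ v ∈ cs, ∃ i, cs[i]? = some v ∧ rf (spec t r 0) v = i := by
      intro v hv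
      obtain ⟨i, hi⟩ := List.mem_iff_getElem?.1 hv
      have hmem : (v, x, i) ∈ spec t r 0 := (hch v i).2 ⟨i, hi, rfl⟩
      exact ⟨i, hi, by rw [rf, lookS hnd hmem]⟩
    have hncard : {v : Fin m | pf (spec t r 0) v = x ∧ v ≠ x}.ncard = cs.length := by
      rw [c2]
      have : {v : Fin m | v ∈ cs} = ↑cs.toFinset := by ext v; simp
      rw [this, Set.ncard_coe_finset, List.toFinset_card_of_nodup hcsnd]
    rw [hncard, c2]
    refine ⟨?_, ?_, ?_⟩
    · intro v hv
      obtain ⟨i, hi, hrv⟩ := c3 v hv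
      have : i < cs.length := (List.getElem?_eq_some_iff.1 hi).1
      simpa [hrv] using this
    · intro v1 h1 v2 h2 heq
      obtain ⟨i1, hi1, hr1⟩ := c3 v1 h1
      obtain ⟨i2, hi2, hr2⟩ := c3 v2 h2
      rw [hr1, hr2] at heq
      subst heq
      rw [hi1] at hi2
      exact Option.some.inj hi2
    · intro j hj
      simp only [Set.mem_Iio] at hj
      have hjv : cs[j]? = some cs[j] := List.getElem?_eq_some_iff.2 ⟨hj, rfl⟩
      have hmem : (cs[j], x, j) ∈ spec t r 0 := (hch _ j).2 ⟨j, hjv, rfl⟩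
      refine ⟨cs[j], ?_, ?_⟩
      · exact List.mem_iff_getElem?.2 ⟨j, hjv⟩
      · rw [rf, lookS hnd hmem]
  · intro v hv
    have hvr : v = r := (pf_eq_self_iff hnd hr hcov v).1 hv
    subst hvr
    rw [rf, look_of_not_labs hr]

end Code

section BuildSec

variable {m : ℕ} (p : Fin m → Fin m) (rk : Fin m → ℕ) (r : Fin m)

/-- Strict descendants of `x` under the parent map `p`. -/
def desc (x : Fin m) : Set (Fin m) := {v | v ≠ x ∧ ∃ l, (p^[l]) v = x}

variable (hfix : ∀ v, p v = v ↔ v = r) (hreach : ∀ v, ∃ l, (p^[l]) v = r)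

include hfix hreach

theorem no_cycle {v : Fin m} {l : ℕ} (hl : 0 < l) (h : (p^[l]) v = v) : v = r := by
  obtain ⟨j, hj⟩ := hreach v
  have hmul : ∀ a, (p^[a * l]) v = v := by
    intro a
    induction a with
    | zero => simp
    | succ a ih =>
      rw [Nat.succ_mul, Function.iterate_add_apply, h, ih]
  have hfixr : p r = r := (hfix r).2 rfl
  have : (p^[j * l]) v = r := by
    have hjl : j ≤ j * l := Nat.le_mul_of_pos_right j hl
    calc (p^[j * l]) v = (p^[j * l - j]) ((p^[j]) v) := by
          rw [← Function.iterate_add_apply, Nat.sub_add_cancel hjl]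
      _ = (p^[j * l - j]) r := by rw [hj]
      _ = r := Function.iterate_fixed hfixr _
  rw [hmul j] at this
  exact this

theorem desc_antisymm {v x : Fin m} (h1 : v ∈ desc p x) (h2 : x ∈ desc p v) : False := by
  obtain ⟨hvx, l1, hl1⟩ := h1
  obtain ⟨hxv, l2, hl2⟩ := h2
  have hl1pos : 0 < l1 := by
    rcases Nat.eq_zero_or_pos l1 with rfl | h
    · exact absurd hl1 hvx
    · exact h
  have hcyc : (p^[l2 + l1]) v = v := by
    rw [Function.iterate_add_apply, hl1, hl2]
  have hvr : v = r := no_cycle p r hfix hreach (by omega) hcyc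
  subst hvr
  have : (p^[l1]) v = v := Function.iterate_fixed ((hfix v).2 rfl) _
  rw [hl1] at this
  exact hvx this.symm

theorem not_mem_desc_self (x : Fin m) : x ∉ desc p x := fun h => h.1 rfl

theorem desc_trans {v c x : Fin m} (hv : v ∈ desc p c) (hc : c ∈ desc p x) : v ∈ desc p x := by
  obtain ⟨hvc, l, hl⟩ := hv
  obtain ⟨hcx, l', hl'⟩ := hc
  refine ⟨?_, l' + l, by rw [Function.iterate_add_apply, hl, hl']⟩
  rintro rfl
  exact desc_antisymm p r hfix hreach ⟨hvc, l, hl⟩ ⟨hcx, l', hl'⟩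

theorem child_mem_desc {c x : Fin m} (h1 : p c = x) (h2 : c ≠ x) : c ∈ desc p x :=
  ⟨h2, 1, by simpa using h1⟩

theorem no_merge_le {x c1 c2 v : Fin m} {l1 l2 : ℕ} (hc1 : p c1 = x) (hc2 : p c2 = x)
    (hne1 : c1 ≠ x) (hne2 : c2 ≠ x) (hne : c1 ≠ c2)
    (h1 : (p^[l1]) v = c1) (h2 : (p^[l2]) v = c2) (hle : l1 ≤ l2) : False := by
  have hd : (p^[l2 - l1]) c1 = c2 := by
    rw [← h1, ← Function.iterate_add_apply, Nat.sub_add_cancel hle, h2]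
  rcases Nat.eq_zero_or_pos (l2 - l1) with hz | hpos
  · rw [hz] at hd; exact hne hd
  · have hd1 : (p^[l2 - l1 - 1]) x = c2 := by
      rw [← hc1, ← Function.iterate_succ_apply, Nat.succ_eq_add_one,
        Nat.sub_add_cancel hpos, hd]
    have hcyc : (p^[l2 - l1]) x = x := by
      rw [← Nat.sub_add_cancel hpos, Function.iterate_succ_apply', hd1, hc2]
    have hxr : x = r := no_cycle p r hfix hreach hpos hcyc
    subst hxr
    have : (p^[l2 - l1 - 1]) x = x := Function.iterate_fixed ((hfix x).2 rfl) _
    rw [hd1] at this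
    exact hne2 this

theorem sib_disj {π c1 c2 v : Fin m} (hc1 : p c1 = π) (hc2 : p c2 = π)
    (hne1 : c1 ≠ π) (hne2 : c2 ≠ π) (hne : c1 ≠ c2)
    (h1 : v = c1 ∨ v ∈ desc p c1) (h2 : v = c2 ∨ v ∈ desc p c2) : False := by
  have e1 : ∃ l1, (p^[l1]) v = c1 := by
    rcases h1 with rfl | ⟨-, l, hl⟩
    exacts [⟨0, rfl⟩, ⟨l, hl⟩]
  have e2 : ∃ l2, (p^[l2]) v = c2 := by
    rcases h2 with rfl | ⟨-, l, hl⟩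
    exacts [⟨0, rfl⟩, ⟨l, hl⟩]
  obtain ⟨l1, hl1⟩ := e1
  obtain ⟨l2, hl2⟩ := e2
  rcases le_total l1 l2 with h | h
  · exact no_merge_le p r hfix hreach hc1 hc2 hne1 hne2 hne hl1 hl2 h
  · exact no_merge_le p r hfix hreach hc2 hc1 hne2 hne1 hne.symm hl2 hl1 h

theorem desc_step {v x : Fin m} (hv : v ∈ desc p x) :
    ∃ c, p c = x ∧ c ≠ x ∧ (v = c ∨ v ∈ desc p c) := by
  obtain ⟨hvx, hex⟩ := hv
  classical
  set l₀ := Nat.find hex with hl₀def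
  have hl₀ : (p^[l₀]) v = x := Nat.find_spec hex
  have hl₀pos : 0 < l₀ := by
    rcases Nat.eq_zero_or_pos l₀ with hz | h
    · rw [hz] at hl₀; exact absurd hl₀ hvx
    · exact h
  refine ⟨(p^[l₀ - 1]) v, ?_, ?_, ?_⟩
  · have h1 : p ((p^[l₀ - 1]) v) = (p^[l₀ - 1 + 1]) v :=
      (Function.iterate_succ_apply' p (l₀ - 1) v).symm
    rw [h1, Nat.sub_add_cancel hl₀pos]
    exact hl₀
  · intro hc
    exact Nat.find_min hex (by omega : l₀ - 1 < l₀) hc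
  · by_cases hvc : v = (p^[l₀ - 1]) v
    · exact Or.inl hvc
    · exact Or.inr ⟨hvc, l₀ - 1, rfl⟩

omit hfix hreach in
theorem ncard_Iio_nat (k : ℕ) : (Set.Iio k : Set ℕ).ncard = k := by
  rw [← Finset.coe_Iio, Set.ncard_coe_finset, Nat.card_Iio]

variable (hbij : ∀ x : Fin m, Set.BijOn rk {v | p v = x ∧ v ≠ x}
    (Set.Iio ({v : Fin m | p v = x ∧ v ≠ x}.ncard)))

include hbij

theorem key_ineq {c π : Fin m} {k : ℕ} (hc : p c = π) (hcπ : c ≠ π) (hrk : rk c = k) :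
    (desc p c).ncard + 1 + k ≤ (desc p π).ncard := by
  classical
  have hcchl : c ∈ {v : Fin m | p v = π ∧ v ≠ π} := ⟨hc, hcπ⟩
  have hklt : k < ({v : Fin m | p v = π ∧ v ≠ π}).ncard := by
    have := (hbij π).mapsTo hcchl
    rwa [hrk, Set.mem_Iio] at this
  set A : Set (Fin m) := insert c (desc p c) with hA
  set B : Set (Fin m) := {v | (p v = π ∧ v ≠ π) ∧ rk v < k} with hB
  have hAsub : A ⊆ desc p π := by
    intro v hv
    rcases hv with rfl | hv
    · exact child_mem_desc p r hfix hreach hc hcπ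
    · exact desc_trans p r hfix hreach hv (child_mem_desc p r hfix hreach hc hcπ)
  have hBsub : B ⊆ desc p π := fun v hv =>
    child_mem_desc p r hfix hreach hv.1.1 hv.1.2
  have hBbij : Set.BijOn rk B (Set.Iio k) := by
    refine ⟨fun v hv => hv.2, (hbij π).injOn.mono (fun v hv => hv.1), ?_⟩
    intro j hj
    have hj' : j ∈ Set.Iio ({v : Fin m | p v = π ∧ v ≠ π}).ncard :=
      Set.mem_Iio.2 (lt_trans hj hklt)
    obtain ⟨v, hv, hvj⟩ := (hbij π).surjOn hj'
    exact ⟨v, ⟨hv, by rw [hvj]; exact hj⟩, hvj⟩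
  have hBcard : B.ncard = k := by
    calc B.ncard = (rk '' B).ncard := (Set.ncard_image_of_injOn hBbij.injOn).symm
      _ = (Set.Iio k : Set ℕ).ncard := by rw [hBbij.image_eq]
      _ = k := ncard_Iio_nat k
  have hdisj : Disjoint A B := by
    rw [Set.disjoint_left]
    intro v hvA hvB
    have hvc : v ≠ c := by
      intro h
      have h2 := hvB.2
      rw [h, hrk] at h2
      exact lt_irrefl _ h2
    rcases hvA with rfl | hvA
    · exact hvc rfl
    · exact sib_disj p r hfix hreach hc hvB.1.1 hcπ hvB.1.2 (Ne.symm hvc)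
        (Or.inr hvA) (Or.inl rfl)
  have hAcard : A.ncard = (desc p c).ncard + 1 :=
    Set.ncard_insert_of_notMem (not_mem_desc_self p r hfix hreach c) (Set.toFinite _)
  have hunion : (A ∪ B).ncard = A.ncard + B.ncard :=
    Set.ncard_union_eq hdisj (Set.toFinite _) (Set.toFinite _)
  have hle : (A ∪ B).ncard ≤ (desc p π).ncard :=
    Set.ncard_le_ncard (Set.union_subset hAsub hBsub) (Set.toFinite _)
  omega

end BuildSec

/-- Reconstruct the binary tree (rotation encoding of the plane forest) from the code. -/
noncomputable def build {m : ℕ} (p : Fin m → Fin m) (rk : Fin m → ℕ) (r : Fin m)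
    (hfix : ∀ v, p v = v ↔ v = r) (hreach : ∀ v, ∃ l, (p^[l]) v = r)
    (hbij : ∀ x : Fin m, Set.BijOn rk {v | p v = x ∧ v ≠ x}
      (Set.Iio ({v : Fin m | p v = x ∧ v ≠ x}.ncard)))
    (π : Fin m) (k : ℕ) : Tree (Fin m) :=
  if h : ∃ c, p c = π ∧ c ≠ π ∧ rk c = k then
    BinaryTree.node h.choose (build p rk r hfix hreach hbij h.choose 0)
      (build p rk r hfix hreach hbij π (k + 1))
  else BinaryTree.nil
termination_by 3 * (desc p π).ncard - k
decreasing_by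
  · have hkey := key_ineq p rk r hfix hreach hbij h.choose_spec.1 h.choose_spec.2.1
      h.choose_spec.2.2
    omega
  · have hkey := key_ineq p rk r hfix hreach hbij h.choose_spec.1 h.choose_spec.2.1
      h.choose_spec.2.2
    omega


section S3

variable (p : Fin m → Fin m) (rk : Fin m → ℕ) (r : Fin m)
    (hfix : ∀ v, p v = v ↔ v = r) (hreach : ∀ v, ∃ l, (p^[l]) v = r)
    (hbij : ∀ x : Fin m, Set.BijOn rk {v | p v = x ∧ v ≠ x}
      (Set.Iio ({v : Fin m | p v = x ∧ v ≠ x}.ncard)))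

theorem build_sound (π : Fin m) (k : ℕ) :
    ∀ v q j, (v, q, j) ∈ spec (build p rk r hfix hreach hbij π k) π k →
      p v = q ∧ rk v = j ∧ v ≠ q := by
  rw [build]
  split_ifs with h
  · obtain ⟨hc1, hc2, hc3⟩ := h.choose_spec
    intro v q j hmem
    simp only [spec, List.mem_cons, List.mem_append, Prod.mk.injEq] at hmem
    rcases hmem with ⟨rfl, rfl, rfl⟩ | hmem | hmem
    · exact ⟨hc1, hc3, hc2⟩
    · exact build_sound h.choose 0 v q j hmem
    · exact build_sound π (k + 1) v q j hmem
  · intro v q j hmem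
    simp [spec] at hmem
termination_by 3 * (desc p π).ncard - k
decreasing_by
  · have hkey := key_ineq p rk r hfix hreach hbij h.choose_spec.1 h.choose_spec.2.1 h.choose_spec.2.2
    omega
  · have hkey := key_ineq p rk r hfix hreach hbij h.choose_spec.1 h.choose_spec.2.1 h.choose_spec.2.2
    omega

theorem build_complete (π : Fin m) (k : ℕ) :
    ∀ c, p c = π → c ≠ π → k ≤ rk c →
      ∀ v, (v = c ∨ v ∈ desc p c) → v ∈ labs (build p rk r hfix hreach hbij π k) := by
  intro c hc hcπ hk v hv
  have hguard : ∃ c', p c' = π ∧ c' ≠ π ∧ rk c' = k := by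
    rcases eq_or_lt_of_le hk with heq | hlt
    · exact ⟨c, hc, hcπ, heq.symm⟩
    · have hmem : c ∈ {v : Fin m | p v = π ∧ v ≠ π} := ⟨hc, hcπ⟩
      have hlt2 := (hbij π).mapsTo hmem
      have hkio : k ∈ Set.Iio ({v : Fin m | p v = π ∧ v ≠ π}).ncard :=
        Set.mem_Iio.2 (lt_trans hlt hlt2)
      obtain ⟨a, ha, haj⟩ := (hbij π).surjOn hkio
      exact ⟨a, ha.1, ha.2, haj⟩
  rw [build, dif_pos hguard]
  obtain ⟨g1, g2, g3⟩ := hguard.choose_spec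
  simp only [labs, List.mem_cons, List.mem_append]
  rcases eq_or_lt_of_le hk with heq | hlt
  · have hceqa : c = hguard.choose :=
      (hbij π).injOn ⟨hc, hcπ⟩ ⟨g1, g2⟩ (by rw [g3, ← heq])
    rcases hv with rfl | hv
    · exact Or.inl hceqa
    · rw [hceqa] at hv
      obtain ⟨c', hc'1, hc'2, hc'3⟩ := desc_step p r hfix hreach hv
      exact Or.inr (Or.inl (build_complete hguard.choose 0 c' hc'1 hc'2 (Nat.zero_le _) v hc'3))
  · exact Or.inr (Or.inr (build_complete π (k + 1) c hc hcπ hlt v hv))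
termination_by 3 * (desc p π).ncard - k
decreasing_by
  · have hkey := key_ineq p rk r hfix hreach hbij hguard.choose_spec.1 hguard.choose_spec.2.1
      hguard.choose_spec.2.2
    omega
  · have hkey := key_ineq p rk r hfix hreach hbij hguard.choose_spec.1 hguard.choose_spec.2.1
      hguard.choose_spec.2.2
    omega

theorem build_pred (π : Fin m) (k : ℕ) :
    ∀ v ∈ labs (build p rk r hfix hreach hbij π k),
      ∃ c, p c = π ∧ c ≠ π ∧ k ≤ rk c ∧ (v = c ∨ v ∈ desc p c) := by
  rw [build]
  split_ifs with h
  · obtain ⟨h1, h2, h3⟩ := h.choose_spec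
    intro v hv
    simp only [labs, List.mem_cons, List.mem_append] at hv
    rcases hv with rfl | hv | hv
    · exact ⟨h.choose, h1, h2, le_of_eq h3.symm, Or.inl rfl⟩
    · obtain ⟨c', hc'1, hc'2, -, hc'3⟩ := build_pred h.choose 0 v hv
      have hvd : v ∈ desc p h.choose := by
        rcases hc'3 with rfl | hd
        · exact child_mem_desc p r hfix hreach hc'1 hc'2
        · exact desc_trans p r hfix hreach hd (child_mem_desc p r hfix hreach hc'1 hc'2)
      exact ⟨h.choose, h1, h2, le_of_eq h3.symm, Or.inr hvd⟩
    · obtain ⟨c, hc1, hc2, hc3, hc4⟩ := build_pred π (k + 1) v hv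
      exact ⟨c, hc1, hc2, le_trans (Nat.le_succ k) hc3, hc4⟩
  · intro v hv
    simp [labs] at hv
termination_by 3 * (desc p π).ncard - k
decreasing_by
  · have hkey := key_ineq p rk r hfix hreach hbij h.choose_spec.1 h.choose_spec.2.1 h.choose_spec.2.2
    omega
  · have hkey := key_ineq p rk r hfix hreach hbij h.choose_spec.1 h.choose_spec.2.1 h.choose_spec.2.2
    omega

theorem build_nodup (π : Fin m) (k : ℕ) :
    (labs (build p rk r hfix hreach hbij π k)).Nodup := by
  rw [build]
  split_ifs with h
  · obtain ⟨h1, h2, h3⟩ := h.choose_spec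
    have hLd := build_nodup h.choose 0
    have hRd := build_nodup π (k + 1)
    have hL : ∀ v ∈ labs (build p rk r hfix hreach hbij h.choose 0), v ∈ desc p h.choose := by
      intro v hv
      obtain ⟨c', hc'1, hc'2, -, hc'3⟩ := build_pred p rk r hfix hreach hbij h.choose 0 v hv
      rcases hc'3 with rfl | hd
      · exact child_mem_desc p r hfix hreach hc'1 hc'2
      · exact desc_trans p r hfix hreach hd (child_mem_desc p r hfix hreach hc'1 hc'2)
    have hR := build_pred p rk r hfix hreach hbij π (k + 1)
    simp only [labs, List.nodup_cons, List.nodup_append]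
    have hcptr : ∀ v, v ∈ labs (build p rk r hfix hreach hbij π (k + 1)) →
        v = h.choose ∨ v ∈ desc p h.choose → False := by
      intro v hvR hvch
      obtain ⟨c, hc1, hc2, hc3, hc4⟩ := hR v hvR
      have hcne : c ≠ h.choose := by
        intro hce
        rw [hce, h3] at hc3
        omega
      exact sib_disj p r hfix hreach h1 hc1 h2 hc2 hcne.symm hvch hc4
    refine ⟨?_, hLd, hRd, ?_⟩
    · intro hmem
      rcases List.mem_append.1 hmem with hmem | hmem
      · exact not_mem_desc_self p r hfix hreach h.choose (hL _ hmem)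
      · exact hcptr h.choose hmem (Or.inl rfl)
    · intro v hvL w hvR hvw
      exact hcptr w hvR (Or.inr (hvw ▸ hL v hvL))
  · simp [labs]
termination_by 3 * (desc p π).ncard - k
decreasing_by
  · have hkey := key_ineq p rk r hfix hreach hbij h.choose_spec.1 h.choose_spec.2.1 h.choose_spec.2.2
    omega
  · have hkey := key_ineq p rk r hfix hreach hbij h.choose_spec.1 h.choose_spec.2.1 h.choose_spec.2.2
    omega

theorem mem_labs_build (v : Fin m) :
    v ∈ labs (build p rk r hfix hreach hbij r 0) ↔ v ≠ r := by
  constructor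
  · intro hv
    obtain ⟨c, hc1, hc2, -, hc4⟩ := build_pred p rk r hfix hreach hbij r 0 v hv
    rcases hc4 with rfl | hd
    · exact hc2
    · intro hvr
      obtain ⟨hne, l, hl⟩ := hd
      rw [hvr, Function.iterate_fixed ((hfix r).2 rfl) l] at hl
      exact hc2 hl.symm
  · intro hvr
    have hvdesc : v ∈ desc p r := ⟨hvr, hreach v⟩
    obtain ⟨c, hc1, hc2, hc3⟩ := desc_step p r hfix hreach hvdesc
    exact build_complete p rk r hfix hreach hbij r 0 c hc1 hc2 (Nat.zero_le _) v hc3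

theorem look_build (hrk0 : ∀ v, p v = v → rk v = 0) (v : Fin m) :
    look v (spec (build p rk r hfix hreach hbij r 0) r 0) = (p v, rk v) := by
  by_cases hvr : v = r
  · have hnot : v ∉ (spec (build p rk r hfix hreach hbij r 0) r 0).map Prod.fst := by
      rw [keys_spec]
      intro hc
      exact (mem_labs_build p rk r hfix hreach hbij v).1 hc hvr
    rw [look_eq_default hnot]
    have hp : p v = v := (hfix v).2 hvr
    rw [hp, hrk0 v hp]
  · have hv : v ∈ (spec (build p rk r hfix hreach hbij r 0) r 0).map Prod.fst := by
      rw [keys_spec]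
      exact (mem_labs_build p rk r hfix hreach hbij v).2 hvr
    have hmem := mem_of_look hv
    have hs := build_sound p rk r hfix hreach hbij r 0 v
      (look v (spec (build p rk r hfix hreach hbij r 0) r 0)).1
      (look v (spec (build p rk r hfix hreach hbij r 0) r 0)).2 hmem
    exact Prod.ext_iff.2 ⟨hs.1.symm, hs.2.1.symm⟩

theorem build_eq_tree : ∀ (t : Tree (Fin m)) (π : Fin m) (k : ℕ),
    (labs t).Nodup → π ∉ labs t →
    (∀ v q j, (v, q, j) ∈ spec t π k → p v = q ∧ rk v = j) →
    (∀ v j, k ≤ j → p v = π → v ≠ π → rk v = j → (v, π, j) ∈ spec t π k) →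
    (∀ x, x ∈ labs t → ∀ v j, p v = x → v ≠ x → rk v = j → (v, x, j) ∈ spec t π k) →
    build p rk r hfix hreach hbij π k = t := by
  intro t
  induction t with
  | nil =>
    intro π k _ _ _ h2 _
    rw [build, dif_neg]
    rintro ⟨c, hc1, hc2, hc3⟩
    have := h2 c k le_rfl hc1 hc2 hc3
    simp [spec] at this
  | node a l rr ihl ihr =>
    intro π k hnd hπ h1 h2 h3
    simp only [labs, List.nodup_cons, List.nodup_append, List.mem_append] at hnd
    obtain ⟨hal_r, hlnd, hrrnd, hdisj⟩ := hnd
    push_neg at hal_r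
    obtain ⟨hal, harr⟩ := hal_r
    simp only [labs, List.mem_cons, List.mem_append] at hπ
    push_neg at hπ
    obtain ⟨hπa, hπl, hπrr⟩ := hπ
    have hha : (a, π, k) ∈ spec (BinaryTree.node a l rr) π k := by simp [spec]
    obtain ⟨hpa, hrka⟩ := h1 a π k hha
    have haπ : a ≠ π := fun hh => hπa hh.symm
    have hguard : ∃ c, p c = π ∧ c ≠ π ∧ rk c = k := ⟨a, hpa, haπ, hrka⟩
    rw [build, dif_pos hguard]
    obtain ⟨g1, g2, g3⟩ := hguard.choose_spec
    have hchooseeq : hguard.choose = a :=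
      (hbij π).injOn ⟨g1, g2⟩ ⟨hpa, haπ⟩ (by rw [g3, hrka])
    have hmemnode : ∀ v q j, ((v, q, j) ∈ spec (BinaryTree.node a l rr) π k ↔
        (v = a ∧ q = π ∧ j = k) ∨ (v, q, j) ∈ spec l a 0 ∨ (v, q, j) ∈ spec rr π (k + 1)) := by
      intro v q j
      simp [spec, Prod.ext_iff]
    rw [hchooseeq]
    have hLeq : build p rk r hfix hreach hbij a 0 = l := by
      apply ihl a 0 hlnd hal
      · intro v q j hm
        exact h1 v q j ((hmemnode v q j).2 (Or.inr (Or.inl hm)))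
      · intro v j hj hpv hva hrkv
        have := (hmemnode v a j).1 (h3 a (by simp [labs]) v j hpv hva hrkv)
        rcases this with ⟨-, hqa, -⟩ | hm | hm
        · exact absurd hqa haπ
        · exact hm
        · rcases parent_mem_of_mem_spec hm with hq | hq
          · exact absurd hq.symm hπa
          · exact absurd hq harr
      · intro x hx v j hpv hvx hrkv
        have := (hmemnode v x j).1 (h3 x (by simp [labs, hx]) v j hpv hvx hrkv)
        rcases this with ⟨-, hqa, -⟩ | hm | hm
        · exact absurd (hqa ▸ hx) hπl
        · exact hm
        · rcases parent_mem_of_mem_spec hm with hq | hq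
          · exact absurd (hq ▸ hx) hπl
          · exact absurd hq (fun h'' => hdisj x hx x h'' rfl)
    have hReq : build p rk r hfix hreach hbij π (k + 1) = rr := by
      apply ihr π (k + 1) hrrnd hπrr
      · intro v q j hm
        exact h1 v q j ((hmemnode v q j).2 (Or.inr (Or.inr hm)))
      · intro v j hj hpv hva hrkv
        have := (hmemnode v π j).1 (h2 v j (by omega) hpv hva hrkv)
        rcases this with ⟨-, -, hjk⟩ | hm | hm
        · omega
        · rcases parent_mem_of_mem_spec hm with hq | hq
          · exact absurd hq.symm haπ
          · exact absurd hq hπl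
        · exact hm
      · intro x hx v j hpv hvx hrkv
        have := (hmemnode v x j).1 (h3 x (by simp [labs, hx]) v j hpv hvx hrkv)
        rcases this with ⟨-, hqa, -⟩ | hm | hm
        · exact absurd (hqa ▸ hx) hπrr
        · rcases parent_mem_of_mem_spec hm with hq | hq
          · exact absurd (hq ▸ hx) harr
          · exact absurd hx (fun h'' => hdisj x hq x h'' rfl)
        · exact hm
    rw [hLeq, hReq]

end S3

/-- Underlying shape of a tree. -/
def shape : Tree α → Tree Unit
  | BinaryTree.nil => BinaryTree.nil
  | BinaryTree.node _ l r => BinaryTree.node () (shape l) (shape r)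

theorem numNodes_shape : ∀ t : Tree α, (shape t).numNodes = t.numNodes
  | BinaryTree.nil => rfl
  | BinaryTree.node a l r => by simp [shape, numNodes_shape l, numNodes_shape r]

/-- Rebuild a tree with a given shape from a list of labels (in preorder). -/
def graft : Tree Unit → List α → Tree α × List α
  | BinaryTree.nil, xs => (BinaryTree.nil, xs)
  | BinaryTree.node _ _ _, [] => (BinaryTree.nil, [])
  | BinaryTree.node _ l r, a :: xs =>
    let g1 := graft l xs
    let g2 := graft r g1.2
    (BinaryTree.node a g1.1 g2.1, g2.2)

theorem graft_labs : ∀ (t : Tree α) (ys : List α), graft (shape t) (labs t ++ ys) = (t, ys)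
  | BinaryTree.nil, ys => by simp [graft, shape, labs]
  | BinaryTree.node a l r, ys => by
    have h1 := graft_labs l (labs r ++ ys)
    have h2 := graft_labs r ys
    simp only [shape, labs, List.cons_append, List.append_eq, List.append_assoc, graft, h1, h2]

theorem graft_shape : ∀ (s : Tree Unit) (xs : List α), s.numNodes ≤ xs.length →
    shape (graft s xs).1 = s ∧ labs (graft s xs).1 ++ (graft s xs).2 = xs
  | BinaryTree.nil, xs, _ => ⟨rfl, rfl⟩
  | BinaryTree.node u l r, [], h => by simp [BinaryTree.numNodes] at h
  | BinaryTree.node u l r, a :: xs, h => by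
    simp only [BinaryTree.numNodes, List.length_cons] at h
    have hl : l.numNodes ≤ xs.length := by omega
    obtain ⟨hsh1, hlab1⟩ := graft_shape l xs hl
    have hlen1 : (labs (graft l xs).1).length = l.numNodes := by
      rw [labs_length, ← numNodes_shape, hsh1]
    have hr : r.numNodes ≤ (graft l xs).2.length := by
      have := congrArg List.length hlab1
      simp only [List.length_append] at this
      omega
    obtain ⟨hsh2, hlab2⟩ := graft_shape r _ hr
    constructor
    · simp only [graft, shape, hsh1, hsh2]
    · simp only [graft, labs, List.cons_append, List.append_assoc, hlab2, hlab1]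

/-- Splitting a tree with side conditions into its shape and its label list. -/
noncomputable def treeSplit (n : ℕ) (P : List α → Prop) :
    {t : Tree α // t.numNodes = n ∧ P (labs t)} ≃
      {s : Tree Unit // s.numNodes = n} × {l : List α // l.length = n ∧ P l} where
  toFun t := ⟨⟨shape t.1, by rw [numNodes_shape, t.2.1]⟩,
    ⟨labs t.1, by rw [labs_length, t.2.1], t.2.2⟩⟩
  invFun sl := ⟨(graft sl.1.1 sl.2.1).1, by
    obtain ⟨⟨s, hs⟩, ⟨l, hl, hpl⟩⟩ := sl
    have hle : s.numNodes ≤ l.length := by omega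
    obtain ⟨hsh, hlab⟩ := graft_shape s l hle
    have hlen : (labs (graft s l).1).length = n := by
      rw [labs_length, ← numNodes_shape, hsh, hs]
    have h2 : (graft s l).2 = [] := by
      have := congrArg List.length hlab
      simp only [List.length_append] at this
      rw [← List.length_eq_zero_iff]
      omega
    rw [h2, List.append_nil] at hlab
    constructor
    · rw [← numNodes_shape, hsh, hs]
    · rw [hlab]; exact hpl⟩
  left_inv := by
    rintro ⟨t, ht⟩
    have := graft_labs t []
    rw [List.append_nil] at this
    exact Subtype.ext (by simp [this])
  right_inv := by
    rintro ⟨⟨s, hs⟩, ⟨l, hl, hpl⟩⟩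
    have hle : s.numNodes ≤ l.length := by omega
    obtain ⟨hsh, hlab⟩ := graft_shape s l hle
    have h2 : (graft s l).2 = [] := by
      have := congrArg List.length hlab
      have hlen : (labs (graft s l).1).length = n := by
        rw [labs_length, ← numNodes_shape, hsh, hs]
      simp only [List.length_append] at this
      rw [← List.length_eq_zero_iff]
      omega
    rw [h2, List.append_nil] at hlab
    simp only [Prod.mk.injEq, Subtype.mk.injEq]
    exact ⟨hsh, hlab⟩

/-- Nodup lists of a given length avoiding `r`, as embeddings. -/
noncomputable def listEquiv (n : ℕ) (r : α) :
    {l : List α // l.length = n ∧ (l.Nodup ∧ r ∉ l)} ≃ (Fin n ↪ {x : α // x ≠ r}) where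
  toFun l := ⟨fun i => ⟨l.1.get (Fin.cast l.2.1.symm i), by
      intro hc
      have hm := l.1.get_mem (Fin.cast l.2.1.symm i)
      rw [hc] at hm
      exact l.2.2.2 hm⟩, by
    intro i j hij
    simp only [Subtype.mk.injEq] at hij
    have := (List.Nodup.get_inj_iff l.2.2.1).1 hij
    exact Fin.cast_injective _ this⟩
  invFun f := ⟨List.ofFn (fun i => (f i).1), by
    refine ⟨by simp, List.nodup_ofFn.2 ?_, ?_⟩
    · intro i j hij
      exact f.injective (Subtype.ext hij)
    · intro hc
      obtain ⟨i, hi⟩ := List.mem_ofFn.1 hc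
      exact (f i).2 hi⟩
  left_inv := by
    rintro ⟨l, hl, hnd, hr⟩
    apply Subtype.ext
    apply List.ext_get (by simp [hl])
    intro i h1 h2
    simp [List.get_ofFn]
    rfl
  right_inv := by
    intro f
    apply DFunLike.ext
    intro i
    apply Subtype.ext
    simp [List.get_ofFn]


theorem cover {n : ℕ} {t : Tree (Fin (n + 1))} {r : Fin (n + 1)}
    (hnd : (labs t).Nodup) (hr : r ∉ labs t) (hlen : t.numNodes = n) :
    ∀ v, v ≠ r → v ∈ labs t := by
  classical
  have hlen' : (labs t).length = n := by rw [labs_length, hlen]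
  have hsub : (labs t).toFinset ⊆ Finset.univ.erase r := by
    intro v hv
    rw [List.mem_toFinset] at hv
    refine Finset.mem_erase.2 ⟨?_, Finset.mem_univ v⟩
    rintro rfl
    exact hr hv
  have hcard : (Finset.univ.erase r).card = n := by
    rw [Finset.card_erase_of_mem (Finset.mem_univ r), Finset.card_univ, Fintype.card_fin]
    omega
  have htf : (labs t).toFinset.card = n := by
    rw [List.toFinset_card_of_nodup hnd, hlen']
  have heq : (labs t).toFinset = Finset.univ.erase r :=
    Finset.eq_of_subset_of_card_le hsub (by omega)
  intro v hv
  have : v ∈ (labs t).toFinset := by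
    rw [heq]
    exact Finset.mem_erase.2 ⟨hv, Finset.mem_univ v⟩
  exact List.mem_toFinset.1 this

/-- The master bijection between labeled rooted plane trees (as root + binary tree with
distinct labels avoiding the root) and parent/rank codes. -/
noncomputable def codeEquiv (n : ℕ) :
    {x : Fin (n + 1) × Tree (Fin (n + 1)) //
        (labs x.2).Nodup ∧ x.1 ∉ labs x.2 ∧ x.2.numNodes = n} ≃
      {pr : (Fin (n + 1) → Fin (n + 1)) × (Fin (n + 1) → ℕ) //
        (∃ r, IsTreeRootedAt (n + 1) pr.1 r) ∧ IsPlaneOrder (n + 1) pr.1 pr.2} where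
  toFun a :=
    ⟨(pf (spec a.1.2 a.1.1 0), rf (spec a.1.2 a.1.1 0)),
      ⟨a.1.1, code_isTree a.2.1 a.2.2.1 (cover a.2.1 a.2.2.1 a.2.2.2)⟩,
      code_isPlane a.2.1 a.2.2.1 (cover a.2.1 a.2.2.1 a.2.2.2)⟩
  invFun b :=
    ⟨(b.2.1.choose,
      build b.1.1 b.1.2 b.2.1.choose b.2.1.choose_spec.1 b.2.1.choose_spec.2 b.2.2.1
        b.2.1.choose 0),
      build_nodup _ _ _ _ _ _ _ _,
      fun hc => (mem_labs_build _ _ _ _ _ _ _).1 hc rfl, by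
      set p := b.1.1
      set rk := b.1.2
      set r := b.2.1.choose
      have h1 := b.2.1.choose_spec.1
      have h2 := b.2.1.choose_spec.2
      have hbij := b.2.2.1
      set t' := build p rk r h1 h2 hbij r 0 with ht'
      have hnd : (labs t').Nodup := build_nodup _ _ _ _ _ _ _ _
      have hmem : ∀ v, v ∈ labs t' ↔ v ≠ r := fun v => mem_labs_build _ _ _ _ _ _ v
      have htf : (labs t').toFinset = Finset.univ.erase r := by
        ext v
        rw [List.mem_toFinset, hmem, Finset.mem_erase]
        simp
      have : (labs t').length = n := by
        rw [← List.toFinset_card_of_nodup hnd, htf,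
          Finset.card_erase_of_mem (Finset.mem_univ r), Finset.card_univ, Fintype.card_fin]
        omega
      rw [← labs_length, this]⟩
  left_inv := by
    rintro ⟨⟨r, t⟩, hnd, hr, hlen⟩
    have hcov := cover hnd hr hlen
    set S := spec t r 0 with hS
    have hex : ∃ r', IsTreeRootedAt (n + 1) (pf S) r' := ⟨r, code_isTree hnd hr hcov⟩
    have hrr : hex.choose = r := by
      have h1 := hex.choose_spec.1
      exact (pf_eq_self_iff hnd hr hcov hex.choose).1 ((h1 hex.choose).2 rfl)
    apply Subtype.ext
    apply Prod.ext_iff.2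
    refine ⟨hrr, ?_⟩
    apply build_eq_tree (pf S) (rf S) hex.choose hex.choose_spec.1 hex.choose_spec.2 _
      t hex.choose 0 hnd (by rw [hrr]; exact hr)
    · rw [hrr]
      intro v q j hm
      have hl := lookS hnd hm
      exact ⟨by rw [pf, hl], by rw [rf, hl]⟩
    · rw [hrr]
      intro v j _ hpv hvr hrkv
      have hv : v ∈ labs t := hcov v hvr
      have hm := mem_of_labs (r := r) hv
      have : look v S = (pf S v, rf S v) := rfl
      rw [this, hpv, hrkv] at hm
      exact hm
    · rw [hrr]
      intro x hx v j hpv hvx hrkv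
      have hv : v ∈ labs t := by
        by_contra hvn
        rw [pf, look_of_not_labs hvn] at hpv
        exact hvx hpv
      have hm := mem_of_labs (r := r) hv
      have : look v S = (pf S v, rf S v) := rfl
      rw [this, hpv, hrkv] at hm
      exact hm
  right_inv := by
    rintro ⟨⟨p, rk⟩, hex, hpl⟩
    apply Subtype.ext
    have hlb := look_build p rk hex.choose hex.choose_spec.1 hex.choose_spec.2 hpl.1 hpl.2
    apply Prod.ext_iff.2
    constructor
    · funext v
      show (look v _).1 = p v
      rw [hlb v]
    · funext v
      show (look v _).2 = rk v
      rw [hlb v]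

end LPT

open LPT in
theorem card_labeled_plane_trees (n : ℕ) (hn : 1 ≤ n) :
    (Nat.card {pr : (Fin (n + 1) → Fin (n + 1)) × (Fin (n + 1) → ℕ) //
        (∃ r, IsTreeRootedAt (n + 1) pr.1 r) ∧ IsPlaneOrder (n + 1) pr.1 pr.2} : ℚ) =
      (2 * n).factorial / n.factorial := by
  classical
  -- the chain of equivalences
  have e1 := (codeEquiv n).symm
  have e2 : {x : Fin (n + 1) × Tree (Fin (n + 1)) //
      (labs x.2).Nodup ∧ x.1 ∉ labs x.2 ∧ x.2.numNodes = n} ≃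
      Σ r : Fin (n + 1), {t : Tree (Fin (n + 1)) //
        (labs t).Nodup ∧ r ∉ labs t ∧ t.numNodes = n} :=
    Equiv.subtypeProdEquivSigmaSubtype
      (fun (r : Fin (n + 1)) (t : Tree (Fin (n + 1))) =>
        (labs t).Nodup ∧ r ∉ labs t ∧ t.numNodes = n)
  have e3 : ∀ r : Fin (n + 1), {t : Tree (Fin (n + 1)) //
      (labs t).Nodup ∧ r ∉ labs t ∧ t.numNodes = n} ≃
      {s : Tree Unit // s.numNodes = n} × (Fin n ↪ Fin n) := by
    intro r
    have er : {x : Fin (n + 1) // x ≠ r} ≃ Fin n := by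
      apply Fintype.equivFinOfCardEq
      rw [Fintype.card_subtype_compl, Fintype.card_subtype_eq, Fintype.card_fin]
      omega
    calc {t : Tree (Fin (n + 1)) // (labs t).Nodup ∧ r ∉ labs t ∧ t.numNodes = n}
        ≃ {t : Tree (Fin (n + 1)) // t.numNodes = n ∧ ((labs t).Nodup ∧ r ∉ labs t)} :=
          Equiv.subtypeEquivRight (fun t => by tauto)
      _ ≃ {s : Tree Unit // s.numNodes = n} ×
            {l : List (Fin (n + 1)) // l.length = n ∧ (l.Nodup ∧ r ∉ l)} :=
          treeSplit n (fun l => l.Nodup ∧ r ∉ l)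
      _ ≃ {s : Tree Unit // s.numNodes = n} × (Fin n ↪ {x : Fin (n + 1) // x ≠ r}) :=
          Equiv.prodCongr (Equiv.refl _) (listEquiv n r)
      _ ≃ {s : Tree Unit // s.numNodes = n} × (Fin n ↪ Fin n) :=
          Equiv.prodCongr (Equiv.refl _) (Equiv.embeddingCongr (Equiv.refl _) er)
  have e4 := (Equiv.sigmaCongrRight e3).trans
    (Equiv.sigmaEquivProd (Fin (n + 1)) ({s : Tree Unit // s.numNodes = n} × (Fin n ↪ Fin n)))
  have etot := (e1.trans e2).trans e4
  have hcard : Nat.card {pr : (Fin (n + 1) → Fin (n + 1)) × (Fin (n + 1) → ℕ) //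
      (∃ r, IsTreeRootedAt (n + 1) pr.1 r) ∧ IsPlaneOrder (n + 1) pr.1 pr.2} =
      (n + 1) * (catalan n * n.factorial) := by
    rw [Nat.card_congr etot, Nat.card_prod, Nat.card_prod]
    have hs : Nat.card {s : Tree Unit // s.numNodes = n} = catalan n := by
      rw [Nat.card_congr (Equiv.subtypeEquivRight
        (fun s => (BinaryTree.mem_treesOfNumNodesEq (x := s) (n := n)).symm)),
        Nat.card_eq_fintype_card, Fintype.card_coe, BinaryTree.treesOfNumNodesEq_card_eq_catalan]
    have he : Nat.card (Fin n ↪ Fin n) = n.factorial := by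
      rw [Nat.card_eq_fintype_card, Fintype.card_embedding_eq, Fintype.card_fin,
        Nat.descFactorial_self]
    rw [hs, he, Nat.card_eq_fintype_card, Fintype.card_fin]
  have key : Nat.card {pr : (Fin (n + 1) → Fin (n + 1)) × (Fin (n + 1) → ℕ) //
      (∃ r, IsTreeRootedAt (n + 1) pr.1 r) ∧ IsPlaneOrder (n + 1) pr.1 pr.2} * n.factorial =
      (2 * n).factorial := by
    rw [hcard]
    have h1 : (n + 1) * catalan n = n.centralBinom := succ_mul_catalan_eq_centralBinom n
    have h2 : n.centralBinom = (2 * n).choose n := rfl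
    have h3 : (2 * n).choose n * n.factorial * (2 * n - n).factorial = (2 * n).factorial :=
      Nat.choose_mul_factorial_mul_factorial (by omega)
    have h4 : 2 * n - n = n := by omega
    rw [h4] at h3
    calc (n + 1) * (catalan n * n.factorial) * n.factorial
        = ((n + 1) * catalan n) * n.factorial * n.factorial := by ring
      _ = (2 * n).choose n * n.factorial * n.factorial := by rw [h1, h2]
      _ = (2 * n).factorial := h3
  have hfac : (n.factorial : ℚ) ≠ 0 := by
    exact_mod_cast Nat.factorial_ne_zero n
  rw [eq_div_iff hfac]
  exact_mod_cast key
end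

section
/- For any nonnegative integer sequence (d₁, …, dₙ) with d₁ + ⋯ + dₙ = n−1, the number of labeled plane trees on {1,…,n} in which vertex i has exactly dᵢ children for every i equals (n−1)!. -/
namespace PlaneTreeAux

open Set

/-- The set of labeled plane trees on `Fin m` with degree sequence `d`. -/
abbrev PT (m : ℕ) (d : Fin m → ℕ) :=
  {pr : (Fin m → Fin m) × (Fin m → ℕ) //
    (∃ r, IsTreeRootedAt m pr.1 r) ∧ IsPlaneOrder m pr.1 pr.2 ∧
    ∀ i : Fin m, {v : Fin m | pr.1 v = i ∧ v ≠ i}.ncard = d i}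

lemma rk_le (m : ℕ) (d : Fin m → ℕ) (t : PT m d) (x : Fin m) : t.1.2 x ≤ m := by
  obtain ⟨⟨p, rk⟩, ⟨r, hr1, _⟩, ⟨hpo1, hpo2⟩, _⟩ := t
  show rk x ≤ m
  by_cases hx : p x = x
  · have : rk x = 0 := hpo2 x hx
    omega
  · have hmem : x ∈ {v : Fin m | p v = p x ∧ v ≠ p x} := ⟨rfl, fun h => hx h.symm⟩
    have h2 := (hpo1 (p x)).mapsTo hmem
    have hle : ({v : Fin m | p v = p x ∧ v ≠ p x}).ncard ≤ m := by
      have := Set.ncard_le_ncard (Set.subset_univ {v : Fin m | p v = p x ∧ v ≠ p x})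
        (Set.finite_univ)
      simpa [Set.ncard_univ] using this
    have h3 : rk x < ({v : Fin m | p v = p x ∧ v ≠ p x}).ncard := h2
    omega

instance PT_finite (m : ℕ) (d : Fin m → ℕ) : Finite (PT m d) := by
  have : Function.Injective (fun t : PT m d =>
      ((t.1.1, fun x => (⟨t.1.2 x, Nat.lt_succ_of_le (rk_le m d t x)⟩ : Fin (m+1))) :
        (Fin m → Fin m) × (Fin m → Fin (m+1)))) := by
    intro a b hab
    obtain ⟨h1, h2⟩ := Prod.mk.injEq .. ▸ hab
    apply Subtype.ext
    apply Prod.ext h1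
    funext x
    exact congrArg Fin.val (congrFun h2 x)
  exact Finite.of_injective _ this

lemma base (d : Fin 1 → ℕ) (hd : ∑ i, d i = 0) : Nat.card (PT 1 d) = 1 := by
  have hd0 : ∀ i : Fin 1, d i = 0 := by
    intro i
    have : i = 0 := Subsingleton.elim _ _
    subst this
    simpa using hd
  have hempty : ∀ (p : Fin 1 → Fin 1) (x : Fin 1), {v : Fin 1 | p v = x ∧ v ≠ x} = ∅ := by
    intro p x
    ext v
    simp [Subsingleton.elim v x]
  have hIio : (Set.Iio 0 : Set ℕ) = ∅ := by ext n; simp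
  haveI : Unique (PT 1 d) := by
    refine ⟨⟨⟨(id, fun _ => 0), ?_, ?_, ?_⟩⟩, ?_⟩
    · exact ⟨0, fun v => by simp [Subsingleton.elim v 0], fun v => ⟨0, Subsingleton.elim _ _⟩⟩
    · constructor
      · intro x
        rw [hempty]
        simpa [hIio] using Set.bijOn_empty (fun _ : Fin 1 => (0 : ℕ))
      · intro v _; rfl
    · intro i
      rw [hempty, hd0]
      simp
    · rintro ⟨⟨p, rk⟩, hpr⟩
      apply Subtype.ext
      apply Prod.ext
      · funext x; exact Subsingleton.elim _ _
      · funext x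
        exact hpr.2.1.2 x (Subsingleton.elim _ _)
  exact Nat.card_unique

/-- compose a bijection through an injective image -/
lemma bijOn_of_image {α β γ : Type*} {f : α → β} {g : β → γ} {s : Set α} {t : Set γ}
    (hf : Set.InjOn f s) (h : Set.BijOn (fun a => g (f a)) s t) :
    Set.BijOn g (f '' s) t := by
  refine ⟨?_, ?_, ?_⟩
  · rintro y ⟨x, hx, rfl⟩
    exact h.mapsTo hx
  · rintro y₁ ⟨x₁, hx₁, rfl⟩ y₂ ⟨x₂, hx₂, rfl⟩ hg
    exact congrArg f (h.injOn hx₁ hx₂ hg)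
  · intro c hc
    obtain ⟨x, hx, hgx⟩ := h.surjOn hc
    exact ⟨f x, ⟨x, hx, rfl⟩, hgx⟩

/-- removing value `j` from an initial segment -/
lemma bijOn_remove (D j : ℕ) (hj : j < D) :
    Set.BijOn (fun t => if j < t then t - 1 else t) (Set.Iio D \ {j}) (Set.Iio (D - 1)) := by
  refine ⟨?_, ?_, ?_⟩
  · rintro t ⟨ht, htj⟩
    simp only [Set.mem_Iio] at *
    simp only [Set.mem_singleton_iff] at htj
    split_ifs <;> omega
  · rintro t₁ ⟨ht₁, hj₁⟩ t₂ ⟨ht₂, hj₂⟩ h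
    simp only [Set.mem_Iio, Set.mem_singleton_iff] at *
    split_ifs at h <;> omega
  · intro c hc
    simp only [Set.mem_Iio] at hc
    by_cases hcj : c < j
    · exact ⟨c, ⟨by simp only [Set.mem_Iio]; omega, by simp; omega⟩, by simp; omega⟩
    · exact ⟨c + 1, ⟨by simp only [Set.mem_Iio]; omega, by simp; omega⟩, by simp; omega⟩

/-- inserting value `j` into an initial segment -/
lemma bijOn_insert (D j : ℕ) (hj : j < D) :
    Set.BijOn (fun t => if j ≤ t then t + 1 else t) (Set.Iio (D - 1)) (Set.Iio D \ {j}) := by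
  refine ⟨?_, ?_, ?_⟩
  · intro t ht
    simp only [Set.mem_Iio] at ht
    constructor
    · simp only [Set.mem_Iio]; split_ifs <;> omega
    · simp only [Set.mem_singleton_iff]; split_ifs <;> omega
  · intro t₁ _ t₂ _ h
    simp only at h
    split_ifs at h <;> omega
  · rintro c ⟨hc, hcj⟩
    simp only [Set.mem_Iio] at hc
    simp only [Set.mem_singleton_iff] at hcj
    by_cases h : c < j
    · exact ⟨c, by simp only [Set.mem_Iio]; omega, by simp; omega⟩
    · refine ⟨c - 1, by simp only [Set.mem_Iio]; omega, ?_⟩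
      simp only
      split_ifs <;> omega


/-! ### Leaf insertion / removal -/

variable {m : ℕ}

/-- adjusted degree sequence after removing leaf `v` whose parent is `i` -/
def dmod (d : Fin (m+2) → ℕ) (v i : Fin (m+2)) : Fin (m+1) → ℕ :=
  fun k => if v.succAbove k = i then d i - 1 else d (v.succAbove k)

/-- partial inverse of `v.succAbove` -/
def low (v : Fin (m+2)) (x : Fin (m+2)) : Fin (m+1) :=
  ((finSuccEquiv' v) x).getD 0

lemma low_s (v : Fin (m+2)) (k : Fin (m+1)) : low v (v.succAbove k) = k := by
  simp [low, finSuccEquiv'_succAbove]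

lemma s_low (v : Fin (m+2)) (x : Fin (m+2)) (h : x ≠ v) : v.succAbove (low v x) = x := by
  obtain ⟨k, rfl⟩ := Fin.exists_succAbove_eq h
  rw [low_s]

/-- parent function after inserting leaf `v` with parent `i` -/
def bigP (v i : Fin (m+2)) (p' : Fin (m+1) → Fin (m+1)) : Fin (m+2) → Fin (m+2) :=
  fun x => ((finSuccEquiv' v) x).elim i (fun k => v.succAbove (p' k))

/-- rank function after inserting leaf `v` with parent `i` and rank `j` -/
def bigRk (v i : Fin (m+2)) (p' : Fin (m+1) → Fin (m+1)) (rk' : Fin (m+1) → ℕ) (j : ℕ) :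
    Fin (m+2) → ℕ :=
  fun x => ((finSuccEquiv' v) x).elim j
    (fun k => if v.succAbove (p' k) = i ∧ v.succAbove k ≠ i ∧ j ≤ rk' k
      then rk' k + 1 else rk' k)

lemma bigP_v (v i : Fin (m+2)) (p' : Fin (m+1) → Fin (m+1)) : bigP v i p' v = i := by
  simp [bigP]

lemma bigP_s (v i : Fin (m+2)) (p' : Fin (m+1) → Fin (m+1)) (k : Fin (m+1)) :
    bigP v i p' (v.succAbove k) = v.succAbove (p' k) := by
  simp [bigP, finSuccEquiv'_succAbove]

lemma bigRk_v (v i : Fin (m+2)) (p' : Fin (m+1) → Fin (m+1)) (rk' : Fin (m+1) → ℕ) (j : ℕ) :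
    bigRk v i p' rk' j v = j := by
  simp [bigRk]

lemma bigRk_s (v i : Fin (m+2)) (p' : Fin (m+1) → Fin (m+1)) (rk' : Fin (m+1) → ℕ) (j : ℕ)
    (k : Fin (m+1)) :
    bigRk v i p' rk' j (v.succAbove k) =
      if v.succAbove (p' k) = i ∧ v.succAbove k ≠ i ∧ j ≤ rk' k then rk' k + 1 else rk' k := by
  simp [bigRk, finSuccEquiv'_succAbove]

/-- parent function after removing leaf `v` -/
def smallP (v : Fin (m+2)) (p : Fin (m+2) → Fin (m+2)) : Fin (m+1) → Fin (m+1) :=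
  fun k => low v (p (v.succAbove k))

/-- rank function after removing leaf `v` with parent `i` and rank `j` -/
def smallRk (v i : Fin (m+2)) (p : Fin (m+2) → Fin (m+2)) (rk : Fin (m+2) → ℕ) (j : ℕ) :
    Fin (m+1) → ℕ :=
  fun k => if p (v.succAbove k) = i ∧ v.succAbove k ≠ i ∧ j < rk (v.succAbove k)
    then rk (v.succAbove k) - 1 else rk (v.succAbove k)

lemma goodBig (d : Fin (m+2) → ℕ) (v : Fin (m+2)) (hv : d v = 0)
    (i : Fin (m+2)) (j : ℕ) (hj : j < d i)
    (p' : Fin (m+1) → Fin (m+1)) (rk' : Fin (m+1) → ℕ)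
    (h1 : ∃ r, IsTreeRootedAt (m+1) p' r)
    (h2 : IsPlaneOrder (m+1) p' rk')
    (h3 : ∀ x, {k : Fin (m+1) | p' k = x ∧ k ≠ x}.ncard = dmod d v i x) :
    (∃ r, IsTreeRootedAt (m+2) (bigP v i p') r) ∧
    IsPlaneOrder (m+2) (bigP v i p') (bigRk v i p' rk' j) ∧
    ∀ x, {w : Fin (m+2) | bigP v i p' w = x ∧ w ≠ x}.ncard = d x := by
  obtain ⟨r', hr'1, hr'2⟩ := h1
  obtain ⟨hpo1, hpo2⟩ := h2
  have sInj : Function.Injective v.succAbove := Fin.succAbove_right_injective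
  have hiv : i ≠ v := by intro h; rw [h, hv] at hj; omega
  obtain ⟨x₀, hx₀⟩ := Fin.exists_succAbove_eq hiv
  have hne : ∀ k, v.succAbove k ≠ v := Fin.succAbove_ne v
  have hP := bigP_s v i p'
  have hPv := bigP_v v i p'
  have hPxv : ∀ x, bigP v i p' x ≠ v := by
    intro x
    by_cases hx : x = v
    · subst hx; rw [hPv]; exact hiv
    · obtain ⟨k, rfl⟩ := Fin.exists_succAbove_eq hx
      rw [hP]; exact hne _
  -- fixed points
  have hfix : ∀ w, bigP v i p' w = w ↔ w = v.succAbove r' := by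
    intro w
    by_cases hw : w = v
    · subst hw
      exact iff_of_false (fun h => hiv (hPv.symm.trans h)) (fun h => hne r' h.symm)
    · obtain ⟨k, rfl⟩ := Fin.exists_succAbove_eq hw
      rw [hP]
      constructor
      · intro h; exact congrArg _ ((hr'1 k).mp (sInj h))
      · intro h; exact congrArg _ ((hr'1 k).mpr (sInj h))
  -- reachability
  have hsemi : Function.Semiconj (v.succAbove) p' (bigP v i p') := fun k => (hP k).symm
  have hiter : ∀ l k, (bigP v i p')^[l] (v.succAbove k) = v.succAbove (p'^[l] k) :=
    fun l k => ((hsemi.iterate_right l) k).symm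
  have hreach : ∀ w, ∃ l, (bigP v i p')^[l] w = v.succAbove r' := by
    intro w
    by_cases hw : w = v
    · subst hw
      obtain ⟨l, hl⟩ := hr'2 x₀
      have hit := hiter l x₀
      rw [hx₀] at hit
      exact ⟨l + 1, by rw [Function.iterate_succ_apply, hPv, hit, hl]⟩
    · obtain ⟨k, rfl⟩ := Fin.exists_succAbove_eq hw
      obtain ⟨l, hl⟩ := hr'2 k
      exact ⟨l, by rw [hiter, hl]⟩
  -- children sets
  have hCv : {w : Fin (m+2) | bigP v i p' w = v ∧ w ≠ v} = ∅ := by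
    ext w
    simp only [Set.mem_setOf_eq, Set.mem_empty_iff_false, iff_false, not_and]
    intro h; exact absurd h (hPxv w)
  have hCs : ∀ x : Fin (m+1), v.succAbove x ≠ i →
      {w : Fin (m+2) | bigP v i p' w = v.succAbove x ∧ w ≠ v.succAbove x} =
        v.succAbove '' {k | p' k = x ∧ k ≠ x} := by
    intro x hx
    ext w
    constructor
    · rintro ⟨hw1, hw2⟩
      have hwv : w ≠ v := by rintro rfl; rw [hPv] at hw1; exact hx hw1.symm
      obtain ⟨k, rfl⟩ := Fin.exists_succAbove_eq hwv
      rw [hP] at hw1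
      exact ⟨k, ⟨sInj hw1, fun hkx => hw2 (congrArg _ hkx)⟩, rfl⟩
    · rintro ⟨k, ⟨hk1, hk2⟩, rfl⟩
      exact ⟨by rw [hP, hk1], fun h => hk2 (sInj h)⟩
  have hCi : {w : Fin (m+2) | bigP v i p' w = i ∧ w ≠ i} =
      insert v (v.succAbove '' {k | p' k = x₀ ∧ k ≠ x₀}) := by
    ext w
    simp only [Set.mem_setOf_eq, Set.mem_insert_iff]
    constructor
    · rintro ⟨hw1, hw2⟩
      by_cases hwv : w = v
      · exact Or.inl hwv
      · obtain ⟨k, rfl⟩ := Fin.exists_succAbove_eq hwv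
        rw [hP] at hw1
        exact Or.inr ⟨k, ⟨sInj (hw1.trans hx₀.symm), fun hk => hw2 (by rw [hk, hx₀])⟩, rfl⟩
    · rintro (rfl | ⟨k, ⟨hk1, hk2⟩, rfl⟩)
      · exact ⟨hPv, hiv.symm⟩
      · refine ⟨by rw [hP, hk1, hx₀], ?_⟩
        rw [← hx₀]
        exact fun h => hk2 (sInj h)
  have hvim : ∀ S : Set (Fin (m+1)), v ∉ v.succAbove '' S := by
    rintro S ⟨k, _, hk⟩; exact hne k hk
  -- cardinalities
  have hdx₀ : dmod d v i x₀ = d i - 1 := by rw [dmod, if_pos hx₀]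
  have hncard : ∀ x, {w : Fin (m+2) | bigP v i p' w = x ∧ w ≠ x}.ncard = d x := by
    intro x
    by_cases hxv : x = v
    · subst hxv; rw [hCv, hv]; simp
    · obtain ⟨y, rfl⟩ := Fin.exists_succAbove_eq hxv
      by_cases hyi : v.succAbove y = i
      · have hyx₀ : y = x₀ := sInj (hyi.trans hx₀.symm)
        subst hyx₀
        rw [hyi, hCi, Set.ncard_insert_of_notMem (hvim _),
          Set.ncard_image_of_injective _ sInj, h3, hdx₀]
        omega
      · rw [hCs y hyi, Set.ncard_image_of_injective _ sInj, h3, dmod, if_neg hyi]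
  refine ⟨⟨v.succAbove r', hfix, hreach⟩, ⟨?_, ?_⟩, hncard⟩
  · -- BijOn
    intro x
    rw [hncard x]
    by_cases hxv : x = v
    · subst hxv
      rw [hCv, hv]
      have : (Set.Iio 0 : Set ℕ) = ∅ := by ext t; simp
      rw [this]
      exact Set.bijOn_empty _
    · obtain ⟨y, rfl⟩ := Fin.exists_succAbove_eq hxv
      by_cases hyi : v.succAbove y = i
      · have hyx₀ : y = x₀ := sInj (hyi.trans hx₀.symm)
        subst hyx₀
        rw [hyi, hCi]
        have hb0 : Set.BijOn rk' {k | p' k = y ∧ k ≠ y} (Set.Iio (d i - 1)) := by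
          have hb := hpo1 y
          rw [h3, hdx₀] at hb
          exact hb
        have hcomp : Set.BijOn (fun k => bigRk v i p' rk' j (v.succAbove k))
            {k | p' k = y ∧ k ≠ y} (Set.Iio (d i) \ {j}) := by
          have hb1 := (bijOn_insert (d i) j hj).comp hb0
          refine hb1.congr ?_
          intro k hk
          simp only [Function.comp_apply]
          rw [bigRk_s]
          have hA1 : v.succAbove (p' k) = i := by rw [hk.1, hx₀]
          have hA2 : v.succAbove k ≠ i := by
            rw [← hx₀]; exact fun h => hk.2 (sInj h)
          by_cases hc : j ≤ rk' k
          · rw [if_pos hc, if_pos ⟨hA1, hA2, hc⟩]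
          · rw [if_neg hc, if_neg (fun h => hc h.2.2)]
        have himg := bijOn_of_image (sInj.injOn) hcomp
        have hins := himg.insert (a := v) (by rw [bigRk_v]; simp)
        have hrkv : bigRk v i p' rk' j v = j := bigRk_v v i p' rk' j
        rw [hrkv] at hins
        have : insert j (Set.Iio (d i) \ {j}) = Set.Iio (d i) := by
          rw [Set.insert_diff_singleton, Set.insert_eq_self.mpr (by simpa using hj)]
        rwa [this] at hins
      · rw [hCs y hyi]
        apply bijOn_of_image (sInj.injOn)
        have hb := hpo1 y
        rw [h3, dmod, if_neg hyi] at hb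
        refine hb.congr ?_
        intro k hk
        simp only
        rw [bigRk_s, if_neg]
        rintro ⟨hA1, -, -⟩
        rw [hk.1] at hA1
        exact hyi hA1
  · -- root has rank 0
    intro w hw
    have hw' : w = v.succAbove r' := (hfix w).mp hw
    subst hw'
    rw [bigRk_s, if_neg, hpo2 r' ((hr'1 r').mpr rfl)]
    rintro ⟨hA1, hA2, -⟩
    rw [(hr'1 r').mpr rfl] at hA1
    exact hA2 hA1


lemma goodSmall (d : Fin (m+2) → ℕ) (v : Fin (m+2)) (hv : d v = 0)
    (p : Fin (m+2) → Fin (m+2)) (rk : Fin (m+2) → ℕ)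
    (h1 : ∃ r, IsTreeRootedAt (m+2) p r) (h2 : IsPlaneOrder (m+2) p rk)
    (h3 : ∀ x, {w : Fin (m+2) | p w = x ∧ w ≠ x}.ncard = d x) :
    rk v < d (p v) ∧
    ((∃ r, IsTreeRootedAt (m+1) (smallP v p) r) ∧
      IsPlaneOrder (m+1) (smallP v p) (smallRk v (p v) p rk (rk v)) ∧
      ∀ x, {k : Fin (m+1) | smallP v p k = x ∧ k ≠ x}.ncard = dmod d v (p v) x) ∧
    bigP v (p v) (smallP v p) = p ∧
    bigRk v (p v) (smallP v p) (smallRk v (p v) p rk (rk v)) (rk v) = rk := by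
  obtain ⟨r, hr1, hr2⟩ := h1
  obtain ⟨hpo1, hpo2⟩ := h2
  have sInj : Function.Injective v.succAbove := Fin.succAbove_right_injective
  have hne : ∀ k, v.succAbove k ≠ v := Fin.succAbove_ne v
  -- v has no children
  have hCv : {w : Fin (m+2) | p w = v ∧ w ≠ v} = ∅ := by
    have := h3 v
    rw [hv] at this
    exact (Set.ncard_eq_zero (Set.toFinite _)).mp this
  have hnochild : ∀ w, w ≠ v → p w ≠ v := by
    intro w hw hp
    have : w ∈ {w : Fin (m+2) | p w = v ∧ w ≠ v} := ⟨hp, hw⟩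
    rw [hCv] at this
    exact this
  -- the root is not v
  have hrv : r ≠ v := by
    intro hrv
    subst hrv
    have hno : ∀ l w, w ≠ r → p^[l] w = r → False := by
      intro l
      induction l with
      | zero => intro w hw h; exact hw h
      | succ l ih =>
        intro w hw h
        rw [Function.iterate_succ_apply] at h
        by_cases hpw : p w = r
        · exact hnochild w hw hpw
        · exact ih (p w) hpw h
    obtain ⟨l, hl⟩ := hr2 (r.succAbove 0)
    exact hno l _ (hne 0) hl
  have hpv : p v ≠ v := fun h => hrv ((hr1 v).mp h).symm
  have hvi : v ≠ p v := fun h => hpv h.symm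
  have hvchild : v ∈ {w : Fin (m+2) | p w = p v ∧ w ≠ p v} := ⟨rfl, hvi⟩
  have hjlt : rk v < d (p v) := by
    have h := (hpo1 (p v)).mapsTo hvchild
    rw [h3 (p v)] at h
    exact h
  obtain ⟨x₀, hx₀⟩ := Fin.exists_succAbove_eq hpv
  have hps_ne : ∀ k, p (v.succAbove k) ≠ v := fun k => hnochild _ (hne k)
  have hsm : ∀ k, v.succAbove (smallP v p k) = p (v.succAbove k) :=
    fun k => s_low v _ (hps_ne k)
  have hr₀ : v.succAbove (low v r) = r := s_low v r hrv
  -- fixed points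
  have hfix : ∀ k, smallP v p k = k ↔ k = low v r := by
    intro k
    constructor
    · intro h
      have : p (v.succAbove k) = v.succAbove k := by rw [← hsm, h]
      have := (hr1 _).mp this
      apply sInj
      rw [hr₀, this]
    · intro h
      apply sInj
      rw [hsm, (hr1 _).mpr (by rw [h, hr₀])]
  -- reachability
  have hsemi : Function.Semiconj (v.succAbove) (smallP v p) p := fun k => hsm k
  have hreach : ∀ k, ∃ l, (smallP v p)^[l] k = low v r := by
    intro k
    obtain ⟨l, hl⟩ := hr2 (v.succAbove k)
    refine ⟨l, sInj ?_⟩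
    rw [(hsemi.iterate_right l) k, hl, hr₀]
  -- children sets
  have hCs : ∀ x : Fin (m+1), v.succAbove x ≠ p v →
      {w : Fin (m+2) | p w = v.succAbove x ∧ w ≠ v.succAbove x} =
        v.succAbove '' {k | smallP v p k = x ∧ k ≠ x} := by
    intro x hx
    ext w
    constructor
    · rintro ⟨hw1, hw2⟩
      have hwv : w ≠ v := by rintro rfl; exact hx hw1.symm
      obtain ⟨k, rfl⟩ := Fin.exists_succAbove_eq hwv
      refine ⟨k, ⟨sInj (by rw [hsm, hw1]), fun hkx => hw2 (congrArg _ hkx)⟩, rfl⟩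
    · rintro ⟨k, ⟨hk1, hk2⟩, rfl⟩
      refine ⟨by rw [← hsm, hk1], fun h => hk2 (sInj h)⟩
  have hCi : {w : Fin (m+2) | p w = p v ∧ w ≠ p v} =
      insert v (v.succAbove '' {k | smallP v p k = x₀ ∧ k ≠ x₀}) := by
    ext w
    simp only [Set.mem_setOf_eq, Set.mem_insert_iff]
    constructor
    · rintro ⟨hw1, hw2⟩
      by_cases hwv : w = v
      · exact Or.inl hwv
      · obtain ⟨k, rfl⟩ := Fin.exists_succAbove_eq hwv
        refine Or.inr ⟨k, ⟨sInj (by rw [hsm, hw1, ← hx₀]), fun hk => hw2 ?_⟩, rfl⟩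
        rw [hk, hx₀]
    · rintro (rfl | ⟨k, ⟨hk1, hk2⟩, rfl⟩)
      · exact ⟨rfl, hvi⟩
      · refine ⟨by rw [← hsm, hk1, hx₀], ?_⟩
        rw [← hx₀]
        exact fun h => hk2 (sInj h)
  have hvim : ∀ S : Set (Fin (m+1)), v ∉ v.succAbove '' S := by
    rintro S ⟨k, _, hk⟩; exact hne k hk
  -- cardinalities
  have hncard : ∀ x, {k : Fin (m+1) | smallP v p k = x ∧ k ≠ x}.ncard = dmod d v (p v) x := by
    intro x
    by_cases hxi : v.succAbove x = p v
    · have hxx₀ : x = x₀ := sInj (hxi.trans hx₀.symm)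
      subst hxx₀
      have h := h3 (p v)
      rw [hCi, Set.ncard_insert_of_notMem (hvim _),
        Set.ncard_image_of_injective _ sInj] at h
      rw [dmod, if_pos hxi]
      omega
    · rw [dmod, if_neg hxi, ← h3 (v.succAbove x), hCs x hxi,
        Set.ncard_image_of_injective _ sInj]
  refine ⟨hjlt, ⟨⟨low v r, hfix, hreach⟩, ⟨?_, ?_⟩, hncard⟩, ?_, ?_⟩
  · -- BijOn
    intro x
    rw [hncard x]
    by_cases hxi : v.succAbove x = p v
    · have hxx₀ : x = x₀ := sInj (hxi.trans hx₀.symm)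
      subst hxx₀
      rw [dmod, if_pos hxi]
      have hb : Set.BijOn rk {w : Fin (m+2) | p w = p v ∧ w ≠ p v} (Set.Iio (d (p v))) := by
        have hb := hpo1 (p v)
        rw [h3 (p v)] at hb
        exact hb
      have hsd := hb.sdiff_singleton hvchild
      have himage : {w : Fin (m+2) | p w = p v ∧ w ≠ p v} \ {v} =
          v.succAbove '' {k | smallP v p k = x ∧ k ≠ x} := by
        rw [hCi, Set.insert_diff_self_of_notMem (hvim _)]
      rw [himage] at hsd
      have hcomp1 : Set.BijOn (fun k => rk (v.succAbove k))
          {k | smallP v p k = x ∧ k ≠ x} (Set.Iio (d (p v)) \ {rk v}) := by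
        have := hsd.comp (sInj.injOn.bijOn_image (s := {k | smallP v p k = x ∧ k ≠ x}))
        exact this
      have hcomp2 := (bijOn_remove (d (p v)) (rk v) hjlt).comp hcomp1
      refine hcomp2.congr ?_
      intro k hk
      simp only [Function.comp_apply, smallRk]
      have hA1 : p (v.succAbove k) = p v := by rw [← hsm, hk.1, hx₀]
      have hA2 : v.succAbove k ≠ p v := by
        rw [← hx₀]; exact fun h => hk.2 (sInj h)
      by_cases hc : rk v < rk (v.succAbove k)
      · rw [if_pos hc, if_pos ⟨hA1, hA2, hc⟩]
      · rw [if_neg hc, if_neg (fun h => hc h.2.2)]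
    · rw [dmod, if_neg hxi]
      have hb : Set.BijOn rk {w : Fin (m+2) | p w = v.succAbove x ∧ w ≠ v.succAbove x}
          (Set.Iio (d (v.succAbove x))) := by
        have hb := hpo1 (v.succAbove x)
        rw [h3] at hb
        exact hb
      rw [hCs x hxi] at hb
      have hcomp1 : Set.BijOn (fun k => rk (v.succAbove k))
          {k | smallP v p k = x ∧ k ≠ x} (Set.Iio (d (v.succAbove x))) :=
        hb.comp (sInj.injOn.bijOn_image (s := {k | smallP v p k = x ∧ k ≠ x}))
      refine hcomp1.congr ?_
      intro k hk
      simp only [smallRk]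
      rw [if_neg]
      rintro ⟨hA1, -, -⟩
      rw [← hsm, hk.1] at hA1
      exact hxi hA1
  · -- root rank 0
    intro k hk
    have hk' : k = low v r := (hfix k).mp hk
    subst hk'
    have hrr : rk r = 0 := hpo2 r ((hr1 r).mpr rfl)
    simp only [smallRk]
    rw [if_neg, hr₀, hrr]
    rintro ⟨-, -, hc⟩
    rw [hr₀, hrr] at hc
    omega
  · -- reconstruction of p
    funext x
    by_cases hx : x = v
    · subst hx; rw [bigP_v]
    · obtain ⟨k, rfl⟩ := Fin.exists_succAbove_eq hx
      rw [bigP_s, hsm]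
  · -- reconstruction of rk
    funext x
    by_cases hx : x = v
    · subst hx; rw [bigRk_v]
    · obtain ⟨k, rfl⟩ := Fin.exists_succAbove_eq hx
      rw [bigRk_s, hsm]
      by_cases hA : p (v.succAbove k) = p v ∧ v.succAbove k ≠ p v
      · have hmem : v.succAbove k ∈ {w : Fin (m+2) | p w = p v ∧ w ≠ p v} := ⟨hA.1, hA.2⟩
        have hrkne : rk (v.succAbove k) ≠ rk v := by
          intro h
          exact hne k ((hpo1 (p v)).injOn hmem hvchild h)
        by_cases hc : rk v < rk (v.succAbove k)
        · have hsr : smallRk v (p v) p rk (rk v) k = rk (v.succAbove k) - 1 := by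
            simp only [smallRk]
            rw [if_pos ⟨hA.1, hA.2, hc⟩]
          rw [hsr, if_pos ⟨hA.1, hA.2, by omega⟩]
          omega
        · have hsr : smallRk v (p v) p rk (rk v) k = rk (v.succAbove k) := by
            simp only [smallRk]
            rw [if_neg (fun h => hc h.2.2)]
          rw [hsr, if_neg (by rintro ⟨-, -, hc2⟩; omega)]
      · simp only [smallRk]
        simp only [if_neg (show ¬(p (v.succAbove k) = p v ∧ v.succAbove k ≠ p v ∧
            rk v < rk (v.succAbove k)) from fun h => hA ⟨h.1, h.2.1⟩),
          if_neg (show ¬(p (v.succAbove k) = p v ∧ v.succAbove k ≠ p v ∧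
            rk v ≤ rk (v.succAbove k)) from fun h => hA ⟨h.1, h.2.1⟩)]

lemma sum_dmod (d : Fin (m+2) → ℕ) (hd : ∑ x, d x = m + 1) (v : Fin (m+2)) (hv : d v = 0)
    (i : Fin (m+2)) (hi : 0 < d i) : ∑ k, dmod d v i k = m := by
  have hiv : i ≠ v := by intro h; rw [h, hv] at hi; omega
  obtain ⟨x₀, hx₀⟩ := Fin.exists_succAbove_eq hiv
  have sInj : Function.Injective v.succAbove := Fin.succAbove_right_injective
  have hsum : ∑ x, d x = d v + ∑ k, d (v.succAbove k) := Fin.sum_univ_succAbove d v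
  have h2 : dmod d v i x₀ + ∑ k ∈ Finset.univ.erase x₀, dmod d v i k = ∑ k, dmod d v i k :=
    Finset.add_sum_erase _ _ (Finset.mem_univ x₀)
  have h3 : d (v.succAbove x₀) + ∑ k ∈ Finset.univ.erase x₀, d (v.succAbove k) =
      ∑ k, d (v.succAbove k) :=
    Finset.add_sum_erase _ (fun k => d (v.succAbove k)) (Finset.mem_univ x₀)
  have h4 : ∑ k ∈ Finset.univ.erase x₀, dmod d v i k =
      ∑ k ∈ Finset.univ.erase x₀, d (v.succAbove k) := by
    refine Finset.sum_congr rfl ?_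
    intro k hk
    have hkx₀ : k ≠ x₀ := Finset.ne_of_mem_erase hk
    rw [dmod, if_neg (fun h => hkx₀ (sInj (h.trans hx₀.symm)))]
  have h5 : dmod d v i x₀ = d i - 1 := by rw [dmod, if_pos hx₀]
  rw [hx₀] at h3
  omega

lemma nat_card_sigma {ι : Type*} [Fintype ι] (f : ι → Type*) [∀ i, Finite (f i)] :
    Nat.card (Σ i, f i) = ∑ i, Nat.card (f i) := by
  letI := fun i => Fintype.ofFinite (f i)
  simp [Nat.card_eq_fintype_card]

lemma step (m : ℕ)
    (IH : ∀ d : Fin (m+1) → ℕ, ∑ x, d x = m → Nat.card (PT (m+1) d) = m.factorial)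
    (d : Fin (m+2) → ℕ) (hd : ∑ x, d x = m + 1) :
    Nat.card (PT (m+2) d) = (m+1).factorial := by
  -- there is a leaf
  have hex : ∃ v, d v = 0 := by
    by_contra h
    push_neg at h
    have h1 : ∀ x ∈ Finset.univ, 1 ≤ d x := fun x _ => Nat.one_le_iff_ne_zero.mpr (h x)
    have := Finset.sum_le_sum h1
    simp only [Finset.sum_const, Finset.card_univ, Fintype.card_fin, smul_eq_mul, mul_one] at this
    omega
  obtain ⟨v, hv⟩ := hex
  have sInj : Function.Injective v.succAbove := Fin.succAbove_right_injective
  -- the decoding map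
  let F : (Σ i : Fin (m+2), Fin (d i) × PT (m+1) (dmod d v i)) → PT (m+2) d :=
    fun w => ⟨(bigP v w.1 w.2.2.1.1, bigRk v w.1 w.2.2.1.1 w.2.2.1.2 w.2.1),
      goodBig d v hv w.1 w.2.1 w.2.1.2 w.2.2.1.1 w.2.2.1.2
        w.2.2.2.1 w.2.2.2.2.1 w.2.2.2.2.2⟩
  have hbij : Function.Bijective F := by
    constructor
    · rintro ⟨i₁, j₁, ⟨⟨p₁, rk₁⟩, hg₁⟩⟩ ⟨i₂, j₂, ⟨⟨p₂, rk₂⟩, hg₂⟩⟩ h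
      have hval := congrArg Subtype.val h
      have hP : bigP v i₁ p₁ = bigP v i₂ p₂ := congrArg Prod.fst hval
      have hR : bigRk v i₁ p₁ rk₁ j₁ = bigRk v i₂ p₂ rk₂ j₂ := congrArg Prod.snd hval
      have hi : i₁ = i₂ := by
        have := congrFun hP v
        rwa [bigP_v, bigP_v] at this
      subst hi
      have hj : j₁ = j₂ := by
        have := congrFun hR v
        rw [bigRk_v, bigRk_v] at this
        exact Fin.val_injective this
      subst hj
      have hp : p₁ = p₂ := by
        funext k
        have := congrFun hP (v.succAbove k)
        rw [bigP_s, bigP_s] at this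
        exact sInj this
      subst hp
      have hrk : rk₁ = rk₂ := by
        funext k
        have hRk := congrFun hR (v.succAbove k)
        rw [bigRk_s, bigRk_s] at hRk
        by_cases hA : v.succAbove (p₁ k) = i₁ ∧ v.succAbove k ≠ i₁
        · by_cases hc1 : (j₁ : ℕ) ≤ rk₁ k <;> by_cases hc2 : (j₁ : ℕ) ≤ rk₂ k
          · rw [if_pos ⟨hA.1, hA.2, hc1⟩, if_pos ⟨hA.1, hA.2, hc2⟩] at hRk; omega
          · rw [if_pos ⟨hA.1, hA.2, hc1⟩, if_neg (fun h => hc2 h.2.2)] at hRk; omega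
          · rw [if_neg (fun h => hc1 h.2.2), if_pos ⟨hA.1, hA.2, hc2⟩] at hRk; omega
          · rw [if_neg (fun h => hc1 h.2.2), if_neg (fun h => hc2 h.2.2)] at hRk; omega
        · rw [if_neg (fun h => hA ⟨h.1, h.2.1⟩), if_neg (fun h => hA ⟨h.1, h.2.1⟩)] at hRk
          exact hRk
      subst hrk
      rfl
    · rintro ⟨⟨p, rk⟩, hg⟩
      obtain ⟨hjlt, hgood, hrecP, hrecR⟩ := goodSmall d v hv p rk hg.1 hg.2.1 hg.2.2
      refine ⟨⟨p v, ⟨rk v, hjlt⟩,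
        ⟨(smallP v p, smallRk v (p v) p rk (rk v)), hgood⟩⟩, ?_⟩
      apply Subtype.ext
      show (bigP v (p v) (smallP v p),
        bigRk v (p v) (smallP v p) (smallRk v (p v) p rk (rk v)) (rk v)) = (p, rk)
      rw [hrecP, hrecR]
  rw [← Nat.card_eq_of_bijective F hbij, nat_card_sigma]
  have hterm : ∀ i : Fin (m+2), Nat.card (Fin (d i) × PT (m+1) (dmod d v i)) =
      d i * Nat.factorial m := by
    intro i
    rw [Nat.card_prod, Nat.card_eq_fintype_card, Fintype.card_fin]
    by_cases hi : d i = 0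
    · rw [hi]; ring
    · rw [IH (dmod d v i) (sum_dmod d hd v hv i (by omega))]
  rw [Finset.sum_congr rfl (fun i _ => hterm i), ← Finset.sum_mul, hd, Nat.factorial_succ]

lemma main (m : ℕ) (d : Fin (m+1) → ℕ) (hd : ∑ x, d x = m) :
    Nat.card (PT (m+1) d) = m.factorial := by
  induction m with
  | zero => exact base d hd
  | succ m IH => exact step m IH d hd

end PlaneTreeAux

theorem card_plane_trees_degree_sequence (n : ℕ) (hn : 1 ≤ n) (d : Fin n → ℕ)
    (hd : ∑ i, d i = n - 1) :
    Nat.card {pr : (Fin n → Fin n) × (Fin n → ℕ) //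
        (∃ r, IsTreeRootedAt n pr.1 r) ∧ IsPlaneOrder n pr.1 pr.2 ∧
        ∀ i : Fin n, {v : Fin n | pr.1 v = i ∧ v ≠ i}.ncard = d i} =
      (n - 1).factorial := by
  obtain ⟨m, rfl⟩ : ∃ m, n = m + 1 := ⟨n - 1, by omega⟩
  have hd' : ∑ x, d x = m := by simpa using hd
  simpa using PlaneTreeAux.main m d hd'
end
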